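/- arXiv:1605.06395 — 2 statements merged into one kernel-verified Lean document; each statement's English description precedes it below -/
import Mathlib

section
/- Let G = G₀ *_H G₁ be a nondegenerate free product with amalgamation, and let K₀, K₁ be the subgroups defined below. Then the following are equivalent: (i) K₀ = K₁ = {e}; (ii) for every finite subset F ⊆ G \ {e} there exists g ∈ G such that gFg⁻¹ ∩ H = ∅; (iii) for every finite subset F ⊆ H \ {e} there exists g ∈ G such that gFg⁻¹ ∩ H = ∅. -/
variable {G : Type*} [Group G]

/-- `AltWord G₀ G₁ H j w`: the list `w` is an alternating word whose `i`-th letter lies in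
`G_{(i+j) mod 2} \ H`. -/
def AltWord (G₀ G₁ H : Subgroup G) (j : ℕ) (w : List G) : Prop :=
  ∀ (i : ℕ) (hi : i < w.length),
    w.get ⟨i, hi⟩ ∈ (if (i + j) % 2 = 0 then (G₀ : Set G) else (G₁ : Set G)) \ (H : Set G)

/-- `G` is the free product of its subgroups `G₀` and `G₁` amalgamated over their common
subgroup `H` (internal characterization: `G₀ ∩ G₁ = H`, the subgroups `G₀` and `G₁` generate
`G`, and no nonempty alternating word with letters in `G₀ \ H` and `G₁ \ H` has product
in `H`). -/
structure IsAmalgam (G₀ G₁ H : Subgroup G) : Prop where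
  le_left : H ≤ G₀
  le_right : H ≤ G₁
  inf_eq : G₀ ⊓ G₁ = H
  closure_eq_top : Subgroup.closure ((G₀ : Set G) ∪ (G₁ : Set G)) = ⊤
  reduced : ∀ (j : ℕ) (w : List G), w ≠ [] → AltWord G₀ G₁ H j w → w.prod ∉ H

/-- The amalgam `G₀ *_H G₁` is *nondegenerate*: `([G₀ : H] − 1) · ([G₁ : H] − 1) ≥ 2`,
i.e. `H` is a proper subgroup of both `G₀` and `G₁`, and has index at least `3` (possibly
infinite) in at least one of them. -/
def Nondegenerate (G₀ G₁ H : Subgroup G) : Prop :=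
  H.relIndex G₀ ≠ 1 ∧ H.relIndex G₁ ≠ 1 ∧ ¬(H.relIndex G₀ = 2 ∧ H.relIndex G₁ = 2)

/-- `T_{j,k}`: the set of elements of `G` that are products of alternating words of length
`k` whose first letter lies in `G_j \ H`; by convention `T_{j,0} = H`. -/
def TT (G₀ G₁ H : Subgroup G) (j k : ℕ) : Set G :=
  if k = 0 then (H : Set G)
  else {g | ∃ w : List G, w.length = k ∧ AltWord G₀ G₁ H j w ∧ w.prod = g}

/-- `C_{j,k} = ⋂_{g ∈ T_{j,k}} g H g⁻¹`. -/
def CC (G₀ G₁ H : Subgroup G) (j k : ℕ) : Set G :=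
  ⋂ g ∈ TT G₀ G₁ H j k, {x | g⁻¹ * x * g ∈ H}

/-- `K_j = ⋂_{k ≥ 0} C_{j,k}`. -/
def KK (G₀ G₁ H : Subgroup G) (j : ℕ) : Set G :=
  ⋂ k : ℕ, CC G₀ G₁ H j k

/-- The kernel of the amalgam, `ker G = ⋂_{g ∈ G} g H g⁻¹`, as a set. -/
def amalgamKerSet (H : Subgroup G) : Set G :=
  ⋂ g : G, {x | g⁻¹ * x * g ∈ H}
namespace AmalgamAux

variable {G : Type*} [Group G] (G₀ G₁ H : Subgroup G)

/-- The letter set at position parity `m`. -/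
def Gm (m : ℕ) : Subgroup G := if m % 2 = 0 then G₀ else G₁

def Letter (m : ℕ) (a : G) : Prop := a ∈ Gm G₀ G₁ m ∧ a ∉ H

/-- Recursive version of `AltWord`. -/
def AltW : ℕ → List G → Prop
  | _, [] => True
  | j, a :: w => Letter G₀ G₁ H j a ∧ AltW (j + 1) w

variable {G₀ G₁ H}

lemma gm_congr {m m' : ℕ} (h : m % 2 = m' % 2) : Gm G₀ G₁ m = Gm G₀ G₁ m' := by
  unfold Gm; rw [h]

lemma letter_congr {m m' : ℕ} (h : m % 2 = m' % 2) {a : G}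
    (ha : Letter G₀ G₁ H m a) : Letter G₀ G₁ H m' a := by
  unfold Letter at *; rwa [gm_congr h] at ha

lemma Letter.inv {m : ℕ} {a : G} (ha : Letter G₀ G₁ H m a) : Letter G₀ G₁ H m a⁻¹ := by
  refine ⟨inv_mem ha.1, fun hc => ha.2 ?_⟩
  simpa using inv_mem hc

lemma hH_le_gm (ha : IsAmalgam G₀ G₁ H) (m : ℕ) : H ≤ Gm G₀ G₁ m := by
  unfold Gm; split <;> [exact ha.le_left; exact ha.le_right]

lemma Letter.mul_right (hA : IsAmalgam G₀ G₁ H) {m : ℕ} {a h : G}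
    (ha : Letter G₀ G₁ H m a) (hh : h ∈ H) : Letter G₀ G₁ H m (a * h) := by
  refine ⟨mul_mem ha.1 (hH_le_gm hA m hh), fun hc => ha.2 ?_⟩
  have : a * h * h⁻¹ ∈ H := mul_mem hc (inv_mem hh)
  simpa using this

lemma Letter.mul_left (hA : IsAmalgam G₀ G₁ H) {m : ℕ} {a h : G}
    (ha : Letter G₀ G₁ H m a) (hh : h ∈ H) : Letter G₀ G₁ H m (h * a) := by
  refine ⟨mul_mem (hH_le_gm hA m hh) ha.1, fun hc => ha.2 ?_⟩
  have : h⁻¹ * (h * a) ∈ H := mul_mem (inv_mem hh) hc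
  simpa using this

lemma altW_congr : ∀ {w : List G} {j j' : ℕ}, j % 2 = j' % 2 →
    AltW G₀ G₁ H j w → AltW G₀ G₁ H j' w
  | [], _, _, _, _ => trivial
  | a :: w, j, j', h, hw => by
    exact ⟨letter_congr h hw.1, altW_congr (by omega) hw.2⟩

lemma altW_append : ∀ {w v : List G} {j : ℕ}, AltW G₀ G₁ H j w →
    AltW G₀ G₁ H (w.length + j) v → AltW G₀ G₁ H j (w ++ v)
  | [], v, j, _, hv => by simpa using hv
  | a :: w, v, j, hw, hv => by
    refine ⟨hw.1, altW_append hw.2 (altW_congr (by simp; omega) hv)⟩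

lemma altW_revinv : ∀ {w : List G} {j : ℕ}, AltW G₀ G₁ H j w →
    AltW G₀ G₁ H (w.length + 1 + j) (w.reverse.map fun a => a⁻¹)
  | [], _, _ => trivial
  | a :: w, j, hw => by
    have ih := altW_revinv hw.2
    simp only [List.reverse_cons, List.map_append, List.map_cons, List.map_nil]
    refine altW_append (altW_congr (by simp only [List.length_cons]; omega) ih) ?_
    simp only [List.length_map, List.length_reverse]
    exact ⟨letter_congr (by simp only [List.length_cons]; omega) hw.1.inv, trivial⟩

lemma prod_revinv (w : List G) : (w.reverse.map fun a => a⁻¹).prod = w.prod⁻¹ := by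
  rw [List.prod_inv_reverse, List.map_reverse]

end AmalgamAux
namespace AmalgamAux

variable {G : Type*} [Group G] {G₀ G₁ H : Subgroup G}

lemma letter_iff_aux {m : ℕ} {a : G} :
    a ∈ (if m % 2 = 0 then (G₀ : Set G) else (G₁ : Set G)) \ (H : Set G) ↔
      Letter G₀ G₁ H m a := by
  unfold Letter Gm
  by_cases h : m % 2 = 0 <;> simp [h, Set.mem_diff]

lemma altWord_iff : ∀ {w : List G} {j : ℕ},
    AltWord G₀ G₁ H j w ↔ AltW G₀ G₁ H j w
  | [], j => by
    constructor
    · intro _; trivial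
    · intro _ i hi; exact absurd hi (by simp)
  | a :: w, j => by
    constructor
    · intro h
      refine ⟨?_, altWord_iff.mp (fun i hi => ?_)⟩
      · have h0 := h 0 (by simp)
        simp only [List.get] at h0
        exact letter_congr (by omega) (letter_iff_aux.mp h0)
      · have h1 := h (i + 1) (by simpa using Nat.succ_lt_succ hi)
        simp only [List.get] at h1
        have hidx : i + 1 + j = i + (j + 1) := by omega
        rwa [hidx] at h1
    · intro h i hi
      match i, hi with
      | 0, hi =>
        simp only [List.get]
        exact letter_iff_aux.mpr (letter_congr (by omega) h.1)
      | i + 1, hi =>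
        have hi' : i < w.length := by simpa using Nat.lt_of_succ_lt_succ hi
        have := altWord_iff.mpr h.2 i hi'
        simp only [List.get]
        have hidx : i + (j + 1) = i + 1 + j := by omega
        rwa [hidx] at this

lemma red (hA : IsAmalgam G₀ G₁ H) {j : ℕ} {w : List G}
    (hw : AltW G₀ G₁ H j w) (hne : w ≠ []) : w.prod ∉ H :=
  hA.reduced j w hne (altWord_iff.mpr hw)

/-- Escape persistence core: the normal form of `u * h * u⁻¹` when it is not in `H`. -/
lemma conj_escape (hA : IsAmalgam G₀ G₁ H) :
    ∀ {u : List G} {m : ℕ} {h : G}, AltW G₀ G₁ H m u → h ∈ H →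
    u.prod * h * u.prod⁻¹ ∉ H →
    ∃ z : List G, z ≠ [] ∧ AltW G₀ G₁ H m z ∧ z.length % 2 = 1 ∧
      z.prod = u.prod * h * u.prod⁻¹
  | [], m, h, _, hh, hy => absurd (by simpa using hh) (by simpa using hy)
  | a :: u, m, h, hu, hh, hy => by
    have hprod : (a :: u).prod * h * ((a :: u).prod)⁻¹
        = a * (u.prod * h * u.prod⁻¹) * a⁻¹ := by
      rw [List.prod_cons, mul_inv_rev]
      group
    by_cases hin : u.prod * h * u.prod⁻¹ ∈ H
    · refine ⟨[a * (u.prod * h * u.prod⁻¹) * a⁻¹], by simp, ⟨⟨?_, ?_⟩, trivial⟩, by simp, ?_⟩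
      · exact mul_mem (mul_mem hu.1.1 (hH_le_gm hA m hin)) (inv_mem hu.1.1)
      · rw [← hprod]; exact hy
      · simp only [List.prod_cons, List.prod_nil, mul_one, hprod]
        group
    · obtain ⟨z, hz0, hz1, hz2, hz3⟩ := conj_escape hA hu.2 hh hin
      refine ⟨a :: (z ++ [a⁻¹]), by simp, ?_, ?_, ?_⟩
      · refine ⟨hu.1, altW_append hz1 ⟨letter_congr (by omega) hu.1.inv, trivial⟩⟩
      · simp; omega
      · rw [List.prod_cons, List.prod_append, hz3, hprod]
        simp [mul_assoc]

/-- Uniqueness of normal forms (head-coset version). -/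
lemma unique (hA : IsAmalgam G₀ G₁ H) : ∀ {w w' : List G} {j j' : ℕ} {h : G},
    AltW G₀ G₁ H j w → AltW G₀ G₁ H j' w' → h ∈ H → w.prod = w'.prod * h →
    w.length = w'.length ∧
      ∀ (a : G) (u : List G) (b : G) (u' : List G),
        w = a :: u → w' = b :: u' → a⁻¹ * b ∈ H := by
  intro w
  induction w with
  | nil =>
    intro w' j j' h hw hw' hh heq
    have hpw' : w'.prod ∈ H := by
      have h1 : w'.prod * h = 1 := by simpa using heq.symm
      rw [eq_inv_of_mul_eq_one_left h1]; exact inv_mem hh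
    match w' with
    | [] => exact ⟨rfl, fun a u b u' h1 h2 => by simp at h1⟩
    | b :: u' => exact absurd hpw' (red hA hw' (by simp))
  | cons a u ih =>
    intro w' j j' h hw hw' hh heq
    match w' with
    | [] =>
      exfalso
      have : (a :: u).prod ∈ H := by
        simp only [List.prod_nil, one_mul] at heq
        rw [heq]; exact hh
      exact red hA hw (by simp) this
    | b :: u' =>
      -- key product identity
      have hkey : u.prod⁻¹ * (a⁻¹ * (b * u'.prod)) = h⁻¹ := by
        have h1 : a * u.prod = b * u'.prod * h := by
          simpa only [List.prod_cons] using heq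
        have : u.prod = a⁻¹ * (b * u'.prod * h) := by
          rw [← h1]; group
        rw [this]; group
      have hjj : j % 2 = j' % 2 := by
        by_contra hne
        have hW : AltW G₀ G₁ H (u.length + 1 + (j + 1))
            ((u.reverse.map fun x => x⁻¹) ++ (a⁻¹ :: b :: u')) := by
          refine altW_append (altW_revinv hw.2) ?_
          simp only [List.length_map, List.length_reverse]
          refine ⟨letter_congr (by omega) hw.1.inv, ?_⟩
          refine altW_congr (show j' % 2 = _ by omega) hw'
        have : ((u.reverse.map fun x => x⁻¹) ++ (a⁻¹ :: b :: u')).prod = h⁻¹ := by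
          rw [List.prod_append, prod_revinv, List.prod_cons, List.prod_cons, ← hkey]
        exact red hA hW (by simp) (this ▸ inv_mem hh)
      have hab : a⁻¹ * b ∈ H := by
        by_contra hne
        have hW : AltW G₀ G₁ H (u.length + 1 + (j + 1))
            ((u.reverse.map fun x => x⁻¹) ++ ((a⁻¹ * b) :: u')) := by
          refine altW_append (altW_revinv hw.2) ?_
          simp only [List.length_map, List.length_reverse]
          refine ⟨letter_congr (m := j) (by omega) ⟨?_, hne⟩, ?_⟩
          · refine mul_mem (inv_mem hw.1.1) ?_
            rw [gm_congr (G₀ := G₀) (G₁ := G₁) hjj]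
            exact hw'.1.1
          · exact altW_congr (j := j' + 1) (by omega) hw'.2
        have : ((u.reverse.map fun x => x⁻¹) ++ ((a⁻¹ * b) :: u')).prod = h⁻¹ := by
          rw [List.prod_append, prod_revinv, List.prod_cons, ← hkey]
          group
        exact red hA hW (by simp) (this ▸ inv_mem hh)
      refine ⟨?_, fun a₀ u₀ b₀ u₀' h1 h2 => by
        obtain ⟨rfl, rfl⟩ : a₀ = a ∧ u₀ = u := by
          constructor <;> [exact (List.cons.injEq _ _ _ _ ▸ h1).1.symm;
            exact (List.cons.injEq _ _ _ _ ▸ h1).2.symm]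
        obtain ⟨rfl, rfl⟩ : b₀ = b ∧ u₀' = u' := by
          constructor <;> [exact (List.cons.injEq _ _ _ _ ▸ h2).1.symm;
            exact (List.cons.injEq _ _ _ _ ▸ h2).2.symm]
        exact hab⟩
      match u' with
      | [] =>
        -- u.prod = (a⁻¹*b)*h ∈ H, so u = []
        have hpu : u.prod ∈ H := by
          have h2 : u.prod⁻¹ * (a⁻¹ * b) = h⁻¹ := by simpa using hkey
          have h3 : a⁻¹ * b = u.prod * h⁻¹ := by rw [← h2]; group
          have h4 : u.prod = (a⁻¹ * b) * h := by rw [h3]; group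
          rw [h4]; exact mul_mem hab hh
        match u with
        | [] => rfl
        | c :: u₂ => exact absurd hpu (red hA hw.2 (by simp))
      | b₂ :: u₂ =>
        have hb₂ : Letter G₀ G₁ H (j + 1) ((a⁻¹ * b * b₂)) := by
          have : Letter G₀ G₁ H (j' + 1) b₂ := hw'.2.1
          exact (letter_congr (by omega) this).mul_left hA hab
        have hu'' : AltW G₀ G₁ H (j + 1) ((a⁻¹ * b * b₂) :: u₂) :=
          ⟨hb₂, altW_congr (by omega) hw'.2.2⟩
        have heq' : u.prod = ((a⁻¹ * b * b₂) :: u₂).prod * h := by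
          have h1 : a * u.prod = b * (b₂ :: u₂).prod * h := by
            simpa only [List.prod_cons] using heq
          have h5 : u.prod = a⁻¹ * (b * (b₂ :: u₂).prod * h) := by rw [← h1]; group
          rw [List.prod_cons, h5, List.prod_cons]; group
        obtain ⟨hlen, _⟩ := ih hw.2 hu'' hh heq'
        simp only [List.length_cons] at hlen ⊢
        omega

end AmalgamAux
namespace AmalgamAux

variable {G : Type*} [Group G] {G₀ G₁ H : Subgroup G}

lemma eq_nil_or_append (w : List G) : w = [] ∨ ∃ w₀ a, w = w₀ ++ [a] := by
  rcases w.eq_nil_or_concat with h | ⟨w₀, a, h⟩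
  · exact Or.inl h
  · exact Or.inr ⟨w₀, a, by simpa [List.concat_eq_append] using h⟩

lemma altW_split : ∀ {w v : List G} {j : ℕ}, AltW G₀ G₁ H j (w ++ v) →
    AltW G₀ G₁ H j w ∧ AltW G₀ G₁ H (w.length + j) v
  | [], v, j, h => ⟨trivial, by simpa using h⟩
  | a :: w, v, j, h => by
    obtain ⟨h1, h2⟩ := altW_split h.2
    exact ⟨⟨h.1, h1⟩, altW_congr (by simp only [List.length_cons]; omega) h2⟩

lemma absorb_last (hA : IsAmalgam G₀ G₁ H) {j : ℕ} {w : List G} (hw : AltW G₀ G₁ H j w)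
    (hne : w ≠ []) {c : G} (hc : c ∈ H) :
    ∃ w' : List G, w' ≠ [] ∧ AltW G₀ G₁ H j w' ∧ w'.prod = w.prod * c ∧
      w'.length = w.length := by
  rcases eq_nil_or_append w with rfl | ⟨w₀, a, rfl⟩
  · exact absurd rfl hne
  · obtain ⟨h1, h2⟩ := altW_split hw
    refine ⟨w₀ ++ [a * c], by simp, altW_append h1 ⟨h2.1.mul_right hA hc, trivial⟩, ?_, by simp⟩
    simp [mul_assoc]

lemma absorb_head (hA : IsAmalgam G₀ G₁ H) {j : ℕ} {w : List G} (hw : AltW G₀ G₁ H j w)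
    (hne : w ≠ []) {c : G} (hc : c ∈ H) :
    ∃ w' : List G, w' ≠ [] ∧ AltW G₀ G₁ H j w' ∧ w'.prod = c * w.prod ∧
      w'.length = w.length := by
  match w with
  | [] => exact absurd rfl hne
  | a :: u =>
    exact ⟨(c * a) :: u, by simp, ⟨hw.1.mul_left hA hc, hw.2⟩, by simp [mul_assoc], by simp⟩

/-- The set of elements having a normal form. -/
def NF (G₀ G₁ H : Subgroup G) : Set G :=
  {g | g ∈ H ∨ ∃ (j : ℕ) (w : List G), w ≠ [] ∧ AltW G₀ G₁ H j w ∧ g = w.prod}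

lemma nf_word {j : ℕ} {w : List G} (hw : AltW G₀ G₁ H j w) (hne : w ≠ []) :
    w.prod ∈ NF G₀ G₁ H := Or.inr ⟨j, w, hne, hw, rfl⟩

lemma nf_inv {g : G} (hg : g ∈ NF G₀ G₁ H) : g⁻¹ ∈ NF G₀ G₁ H := by
  rcases hg with hg | ⟨j, w, hne, hw, rfl⟩
  · exact Or.inl (inv_mem hg)
  · refine Or.inr ⟨w.length + 1 + j, w.reverse.map fun a => a⁻¹, by simpa using hne,
      altW_revinv hw, (prod_revinv w).symm⟩

lemma nf_mul_word (hA : IsAmalgam G₀ G₁ H) :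
    ∀ (n : ℕ) {w v : List G} {j j' : ℕ}, w.length ≤ n → AltW G₀ G₁ H j w →
      AltW G₀ G₁ H j' v → w.prod * v.prod ∈ NF G₀ G₁ H := by
  intro n
  induction n with
  | zero =>
    intro w v j j' hlen hw hv
    have : w = [] := List.eq_nil_of_length_eq_zero (Nat.le_zero.mp hlen)
    subst this
    rcases eq_nil_or_append v with rfl | ⟨v₀, b, rfl⟩
    · simp only [List.prod_nil, mul_one]; exact Or.inl H.one_mem
    · simpa using nf_word hv (by simp)
  | succ n ih =>
    intro w v j j' hlen hw hv
    rcases eq_nil_or_append w with rfl | ⟨w₀, a, rfl⟩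
    · rcases eq_nil_or_append v with rfl | ⟨v₀, b, rfl⟩
      · simp only [List.prod_nil, mul_one]; exact Or.inl H.one_mem
      · simpa using nf_word hv (by simp)
    · match v with
      | [] => simpa using nf_word hw (by simp)
      | b :: v₀ =>
        obtain ⟨hw₀, ha⟩ := altW_split hw
        by_cases hpar : (w₀.length + j) % 2 = j' % 2
        · -- same parity: letters a, b in the same factor
          by_cases hab : a * b ∈ H
          · -- recurse
            rcases v₀ with _ | ⟨b₂, v₁⟩
            · -- w.prod * v.prod = w₀.prod * (a*b)
              have hprod : (w₀ ++ [a]).prod * [b].prod = w₀.prod * (a * b) := by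
                simp [mul_assoc]
              rw [hprod]
              rcases eq_nil_or_append w₀ with rfl | ⟨w₁, a₁, rfl⟩
              · simp only [List.prod_nil, one_mul]; exact Or.inl hab
              · obtain ⟨w', hne', hw', hp', _⟩ := absorb_last hA hw₀ (by simp) hab
                rw [← hp']
                exact nf_word hw' hne'
            · have hprod : (w₀ ++ [a]).prod * (b :: b₂ :: v₁).prod
                  = w₀.prod * ((a * b * b₂) :: v₁).prod := by
                simp [mul_assoc]
              rw [hprod]
              have hb₂ : Letter G₀ G₁ H (w₀.length + j + 1) (a * b * b₂) := by
                refine Letter.mul_left hA ?_ hab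
                exact letter_congr (by omega) hv.2.1
              have hv' : AltW G₀ G₁ H (w₀.length + j + 1) ((a * b * b₂) :: v₁) :=
                ⟨hb₂, altW_congr (j := j' + 1 + 1) (by omega) hv.2.2⟩
              refine ih ?_ hw₀ hv'
              simp only [List.length_append, List.length_cons, List.length_nil] at hlen
              omega
          · -- letter c = a*b survives
            have hc : Letter G₀ G₁ H (w₀.length + j) (a * b) := by
              refine ⟨mul_mem ha.1.1 ?_, hab⟩
              have hb := hv.1.1
              rwa [← gm_congr (G₀ := G₀) (G₁ := G₁) hpar] at hb
            have hW : AltW G₀ G₁ H j (w₀ ++ ((a * b) :: v₀)) :=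
              altW_append hw₀ ⟨hc, altW_congr (j := j' + 1) (by omega) hv.2⟩
            have hprod : (w₀ ++ [a]).prod * (b :: v₀).prod
                = (w₀ ++ ((a * b) :: v₀)).prod := by
              simp [mul_assoc]
            rw [hprod]
            exact nf_word hW (by simp)
        · -- opposite parity: concatenation is alternating
          have hv' : AltW G₀ G₁ H ((w₀ ++ [a]).length + j) (b :: v₀) := by
            refine altW_congr (j := j') ?_ hv
            simp only [List.length_append, List.length_cons, List.length_nil]
            omega
          have hW : AltW G₀ G₁ H j ((w₀ ++ [a]) ++ (b :: v₀)) := altW_append hw hv'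
          rw [← List.prod_append]
          exact nf_word hW (by simp)

lemma nf_univ (hA : IsAmalgam G₀ G₁ H) (g : G) : g ∈ NF G₀ G₁ H := by
  let N : Subgroup G :=
    { carrier := NF G₀ G₁ H
      one_mem' := Or.inl H.one_mem
      inv_mem' := nf_inv
      mul_mem' := by
        rintro x y (hx | ⟨j, w, hne, hw, rfl⟩) (hy | ⟨j', v, hne', hv, rfl⟩)
        · exact Or.inl (mul_mem hx hy)
        · obtain ⟨w', h1, h2, h3, _⟩ := absorb_head hA hv hne' hx
          rw [← h3]; exact nf_word h2 h1
        · obtain ⟨w', h1, h2, h3, _⟩ := absorb_last hA hw hne hy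
          rw [← h3]; exact nf_word h2 h1
        · exact nf_mul_word hA w.length le_rfl hw hv }
  have hle : Subgroup.closure ((G₀ : Set G) ∪ (G₁ : Set G)) ≤ N := by
    rw [Subgroup.closure_le]
    rintro x (hx | hx)
    · by_cases hxH : x ∈ H
      · exact Or.inl hxH
      · exact Or.inr ⟨0, [x], by simp, ⟨⟨by simpa [Gm] using hx, hxH⟩, trivial⟩, by simp⟩
    · by_cases hxH : x ∈ H
      · exact Or.inl hxH
      · exact Or.inr ⟨1, [x], by simp, ⟨⟨by simpa [Gm] using hx, hxH⟩, trivial⟩, by simp⟩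
  have htop := hA.closure_eq_top
  rw [htop] at hle
  exact hle (Subgroup.mem_top g)

end AmalgamAux
namespace AmalgamAux

variable {G : Type*} [Group G] {G₀ G₁ H : Subgroup G}

lemma exists_letter {m : ℕ} (hrel : H.relIndex (Gm G₀ G₁ m) ≠ 1) :
    ∃ s, Letter G₀ G₁ H m s := by
  by_contra hno
  push_neg at hno
  refine hrel (Subgroup.relIndex_eq_one.mpr fun x hx => ?_)
  by_contra hxH
  exact (hno x) ⟨hx, hxH⟩

lemma exists_two_letters {m : ℕ} (hrel1 : H.relIndex (Gm G₀ G₁ m) ≠ 1)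
    (hrel2 : H.relIndex (Gm G₀ G₁ m) ≠ 2) :
    ∃ s s', Letter G₀ G₁ H m s ∧ Letter G₀ G₁ H m s' ∧ s⁻¹ * s' ∉ H := by
  classical
  set K := Gm G₀ G₁ m with hK
  set H' := H.subgroupOf K with hH'
  by_contra hno
  push_neg at hno
  -- every two letters lie in the same left coset of H
  obtain ⟨s, hs⟩ := exists_letter (G₀ := G₀) (G₁ := G₁) hrel1
  -- the quotient K ⧸ H' has at most 2 elements
  have hsur : Function.Surjective (fun b : Bool =>
      if b then ((1 : K) : K ⧸ H') else ((⟨s, hs.1⟩ : K) : K ⧸ H')) := by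
    intro q
    obtain ⟨x, rfl⟩ := Quotient.exists_rep q
    by_cases hxH : (x : G) ∈ H
    · refine ⟨true, ?_⟩
      simp only [if_true]
      refine (QuotientGroup.eq (s := H') (a := 1) (b := x)).mpr ?_
      simpa [hH', Subgroup.mem_subgroupOf] using hxH
    · refine ⟨false, ?_⟩
      simp only [Bool.false_eq_true, if_false]
      refine ((QuotientGroup.eq (s := H') (a := ⟨s, hs.1⟩) (b := x))).mpr ?_
      have := hno s (x : G) hs ⟨x.2, hxH⟩
      simpa [hH', Subgroup.mem_subgroupOf] using this
  have hfin : Finite (K ⧸ H') := Finite.of_surjective _ hsur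
  have hle : Nat.card (K ⧸ H') ≤ 2 := by
    have := Nat.card_le_card_of_surjective _ hsur
    simpa using this
  have hpos : 0 < Nat.card (K ⧸ H') := Nat.card_pos
  have : H.relIndex K = Nat.card (K ⧸ H') := rfl
  omega

end AmalgamAux
namespace AmalgamAux

variable {G : Type*} [Group G] {G₀ G₁ H : Subgroup G}

/-- The "cone" of group elements lying beyond the edge determined by the alternating word
`t` (of start type `j`) in the Bass–Serre tree. -/
def Cone (G₀ G₁ H : Subgroup G) (t : List G) (j : ℕ) : Set G :=
  {g | ∃ (u : List G) (h : G), AltW G₀ G₁ H (t.length + j) u ∧ h ∈ H ∧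
    g = t.prod * u.prod * h}

lemma self_mem_cone {t : List G} {j : ℕ} : t.prod ∈ Cone G₀ G₁ H t j :=
  ⟨[], 1, trivial, H.one_mem, by simp⟩

lemma cone_mono {t v : List G} {j : ℕ} (hv : AltW G₀ G₁ H (t.length + j) v) :
    Cone G₀ G₁ H (t ++ v) j ⊆ Cone G₀ G₁ H t j := by
  rintro g ⟨u, h, hu, hh, rfl⟩
  refine ⟨v ++ u, h, altW_append hv (altW_congr (by simp only [List.length_append]; omega) hu),
    hh, ?_⟩
  simp [mul_assoc]

lemma conj_h_iff {h g x : G} (hh : h ∈ H) :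
    (g * h)⁻¹ * x * (g * h) ∈ H ↔ g⁻¹ * x * g ∈ H := by
  have hEq : (g * h)⁻¹ * x * (g * h) = h⁻¹ * (g⁻¹ * x * g) * h := by group
  rw [hEq]
  constructor
  · intro hmem
    have := mul_mem (mul_mem hh hmem) (inv_mem hh)
    have hEq2 : h * (h⁻¹ * (g⁻¹ * x * g) * h) * h⁻¹ = g⁻¹ * x * g := by group
    rwa [hEq2] at this
  · intro hmem
    exact mul_mem (mul_mem (inv_mem hh) hmem) hh

lemma coneK (hA : IsAmalgam G₀ G₁ H) {t : List G} {j : ℕ} {x : G}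
    (hx : ∀ c ∈ Cone G₀ G₁ H t j, c⁻¹ * x * c ∈ H) :
    t.prod⁻¹ * x * t.prod ∈ KK G₀ G₁ H ((t.length + j) % 2) := by
  refine Set.mem_iInter.mpr fun k => Set.mem_iInter₂.mpr fun g hg => ?_
  by_cases hk : k = 0
  · subst hk
    simp only [TT, if_pos rfl, SetLike.mem_coe] at hg
    have := hx (t.prod * [].prod * g) ⟨[], g, trivial, hg, rfl⟩
    have hEq : (t.prod * [].prod * g)⁻¹ * x * (t.prod * [].prod * g)
        = g⁻¹ * (t.prod⁻¹ * x * t.prod) * g := by simp; group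
    rwa [hEq] at this
  · simp only [TT, if_neg hk] at hg
    obtain ⟨w, hlen, hW, rfl⟩ := hg
    have hw : AltW G₀ G₁ H (t.length + j) w :=
      altW_congr (by omega) (altWord_iff.mp hW)
    have := hx (t.prod * w.prod * 1) ⟨w, 1, hw, H.one_mem, rfl⟩
    have hEq : (t.prod * w.prod * 1)⁻¹ * x * (t.prod * w.prod * 1)
        = w.prod⁻¹ * (t.prod⁻¹ * x * t.prod) * w.prod := by group
    rwa [hEq] at this

/-- Convexity of fixed edge sets: if `x` fixes an edge in the cone beyond `tb·s·γ` and an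
edge in the (disjoint) cone beyond `tb·s'`, then it fixes the edge `tb·s·γ`. -/
lemma convexity (hA : IsAmalgam G₀ G₁ H) {tb γ δ u u' : List G} {s s' x : G} {j : ℕ}
    (hs : Letter G₀ G₁ H (tb.length + j) s) (hs' : Letter G₀ G₁ H (tb.length + j) s')
    (hss' : s'⁻¹ * s ∉ H)
    (hγ : AltW G₀ G₁ H (tb.length + 1 + j) γ) (hδ : AltW G₀ G₁ H (tb.length + 1 + j) δ)
    (hu : AltW G₀ G₁ H ((tb ++ [s] ++ γ).length + j) u)
    (hu' : AltW G₀ G₁ H ((tb ++ [s'] ++ δ).length + j) u')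
    (h1 : ((tb ++ [s] ++ γ).prod * u.prod)⁻¹ * x * ((tb ++ [s] ++ γ).prod * u.prod) ∈ H)
    (h2 : ((tb ++ [s'] ++ δ).prod * u'.prod)⁻¹ * x * ((tb ++ [s'] ++ δ).prod * u'.prod) ∈ H) :
    (tb ++ [s] ++ γ).prod⁻¹ * x * (tb ++ [s] ++ γ).prod ∈ H := by
  by_contra hy
  have hy_eq : (tb ++ [s] ++ γ).prod⁻¹ * x * (tb ++ [s] ++ γ).prod
      = u.prod * (((tb ++ [s] ++ γ).prod * u.prod)⁻¹ * x *
        ((tb ++ [s] ++ γ).prod * u.prod)) * u.prod⁻¹ := by group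
  obtain ⟨z, hz0, hz1, hzlen, hz3⟩ := conj_escape hA hu h1 (by rw [← hy_eq]; exact hy)
  -- the word for M = T₂⁻¹ * T₁
  have hMw : AltW G₀ G₁ H (δ.length + 1 + (tb.length + 1 + j))
      ((δ.reverse.map fun a => a⁻¹) ++ ((s'⁻¹ * s) :: γ)) := by
    refine altW_append (altW_revinv hδ) ?_
    simp only [List.length_map, List.length_reverse]
    refine ⟨letter_congr (m := tb.length + j) (by omega)
      ⟨mul_mem (inv_mem hs'.1) hs.1, hss'⟩, ?_⟩
    exact altW_congr (j := tb.length + 1 + j) (by omega) hγ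
  -- the grand word W
  have W4 : AltW G₀ G₁ H
      (((δ.reverse.map fun a => a⁻¹) ++ ((s'⁻¹ * s) :: γ)).length + 1 +
        (δ.length + 1 + (tb.length + 1 + j)))
      ((((δ.reverse.map fun a => a⁻¹) ++ ((s'⁻¹ * s) :: γ)).reverse.map fun a => a⁻¹) ++ u') := by
    refine altW_append (altW_revinv hMw) ?_
    refine altW_congr (j := (tb ++ [s'] ++ δ).length + j) ?_ hu'
    simp only [List.length_map, List.length_reverse, List.length_append,
      List.length_cons, List.length_nil]
    omega
  have W3 : AltW G₀ G₁ H ((tb ++ [s] ++ γ).length + j)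
      (z ++ ((((δ.reverse.map fun a => a⁻¹) ++ ((s'⁻¹ * s) :: γ)).reverse.map fun a => a⁻¹)
        ++ u')) := by
    refine altW_append hz1 ?_
    refine altW_congr (j := ((δ.reverse.map fun a => a⁻¹) ++ ((s'⁻¹ * s) :: γ)).length + 1 +
      (δ.length + 1 + (tb.length + 1 + j))) ?_ W4
    simp only [List.length_map, List.length_reverse, List.length_append,
      List.length_cons, List.length_nil]
    omega
  have W2 : AltW G₀ G₁ H (δ.length + 1 + (tb.length + 1 + j))
      (((δ.reverse.map fun a => a⁻¹) ++ ((s'⁻¹ * s) :: γ)) ++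
        (z ++ ((((δ.reverse.map fun a => a⁻¹) ++ ((s'⁻¹ * s) :: γ)).reverse.map fun a => a⁻¹)
          ++ u'))) := by
    refine altW_append hMw ?_
    refine altW_congr (j := (tb ++ [s] ++ γ).length + j) ?_ W3
    simp only [List.length_map, List.length_reverse, List.length_append,
      List.length_cons, List.length_nil]
    omega
  have W1 : AltW G₀ G₁ H (u'.length + 1 + ((tb ++ [s'] ++ δ).length + j))
      ((u'.reverse.map fun a => a⁻¹) ++
        (((δ.reverse.map fun a => a⁻¹) ++ ((s'⁻¹ * s) :: γ)) ++
          (z ++ ((((δ.reverse.map fun a => a⁻¹) ++ ((s'⁻¹ * s) :: γ)).reverse.map fun a => a⁻¹)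
            ++ u')))) := by
    refine altW_append (altW_revinv hu') ?_
    refine altW_congr (j := δ.length + 1 + (tb.length + 1 + j)) ?_ W2
    simp only [List.length_map, List.length_reverse, List.length_append,
      List.length_cons, List.length_nil]
    omega
  have hWne : ((u'.reverse.map fun a => a⁻¹) ++
      (((δ.reverse.map fun a => a⁻¹) ++ ((s'⁻¹ * s) :: γ)) ++
        (z ++ ((((δ.reverse.map fun a => a⁻¹) ++ ((s'⁻¹ * s) :: γ)).reverse.map fun a => a⁻¹)
          ++ u')))) ≠ [] := by
    intro hcon
    have := congrArg List.length hcon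
    simp only [List.length_append, List.length_map, List.length_reverse,
      List.length_cons, List.length_nil] at this
    omega
  have hzprod : z.prod = (tb ++ [s] ++ γ).prod⁻¹ * x * (tb ++ [s] ++ γ).prod := by
    rw [hz3, ← hy_eq]
  have hWprod : ((u'.reverse.map fun a => a⁻¹) ++
      (((δ.reverse.map fun a => a⁻¹) ++ ((s'⁻¹ * s) :: γ)) ++
        (z ++ ((((δ.reverse.map fun a => a⁻¹) ++ ((s'⁻¹ * s) :: γ)).reverse.map fun a => a⁻¹)
          ++ u')))).prod
      = ((tb ++ [s'] ++ δ).prod * u'.prod)⁻¹ * x * ((tb ++ [s'] ++ δ).prod * u'.prod) := by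
    simp only [List.prod_append, prod_revinv, List.prod_cons, List.prod_nil]
    rw [hzprod]
    simp only [List.prod_append, List.prod_cons, List.prod_nil]
    group
  exact red hA W1 hWne (hWprod ▸ h2)

lemma exists_branch (hA : IsAmalgam G₀ G₁ H) (hnd : Nondegenerate G₀ G₁ H)
    (t : List G) (j : ℕ) (ht : AltW G₀ G₁ H j t) :
    ∃ (tb : List G) (s s' : G), AltW G₀ G₁ H j tb ∧
      Cone G₀ G₁ H tb j ⊆ Cone G₀ G₁ H t j ∧
      Letter G₀ G₁ H (tb.length + j) s ∧ Letter G₀ G₁ H (tb.length + j) s' ∧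
      s'⁻¹ * s ∉ H := by
  have hGm : ∀ m : ℕ, H.relIndex (Gm G₀ G₁ m) ≠ 1 := by
    intro m; unfold Gm; split
    · exact hnd.1
    · exact hnd.2.1
  by_cases h2 : H.relIndex (Gm G₀ G₁ (t.length + j)) = 2
  · have h2' : H.relIndex (Gm G₀ G₁ (t.length + j + 1)) ≠ 2 := by
      intro hcon
      refine hnd.2.2 ?_
      have hne : (t.length + j) % 2 ≠ (t.length + j + 1) % 2 := by omega
      unfold Gm at h2 hcon
      rcases Nat.mod_two_eq_zero_or_one (t.length + j) with hm | hm
      · rw [if_pos hm] at h2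
        rw [if_neg (by omega)] at hcon
        exact ⟨h2, hcon⟩
      · rw [if_neg (by omega)] at h2
        rw [if_pos (by omega)] at hcon
        exact ⟨hcon, h2⟩
    obtain ⟨s₀, hs₀⟩ := exists_letter (G₀ := G₀) (G₁ := G₁) (hGm (t.length + j))
    obtain ⟨s, s', hs, hs', hss'⟩ :=
      exists_two_letters (G₀ := G₀) (G₁ := G₁) (hGm (t.length + j + 1)) h2'
    refine ⟨t ++ [s₀], s, s', altW_append ht ⟨hs₀, trivial⟩, cone_mono ⟨hs₀, trivial⟩,
      ?_, ?_, ?_⟩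
    · refine letter_congr (m := t.length + j + 1) ?_ hs
      simp only [List.length_append, List.length_cons, List.length_nil]
      omega
    · refine letter_congr (m := t.length + j + 1) ?_ hs'
      simp only [List.length_append, List.length_cons, List.length_nil]
      omega
    · intro hcon
      exact hss' (by simpa using inv_mem hcon)
  · obtain ⟨s, s', hs, hs', hss'⟩ :=
      exists_two_letters (G₀ := G₀) (G₁ := G₁) (hGm (t.length + j)) h2
    refine ⟨t, s, s', ht, subset_rfl, hs, hs', ?_⟩
    intro hcon
    exact hss' (by simpa using inv_mem hcon)

end AmalgamAux
namespace AmalgamAux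

variable {G : Type*} [Group G] {G₀ G₁ H : Subgroup G}

lemma eq_one_of_mem_KK (hA : IsAmalgam G₀ G₁ H)
    (hK : KK G₀ G₁ H 0 = {1} ∧ KK G₀ G₁ H 1 = {1}) {t : List G} {j : ℕ} {x : G}
    (hfix : ∀ c ∈ Cone G₀ G₁ H t j, c⁻¹ * x * c ∈ H) : x = 1 := by
  have hmem := coneK hA hfix
  have h1 : t.prod⁻¹ * x * t.prod = 1 := by
    rcases Nat.mod_two_eq_zero_or_one (t.length + j) with hm | hm
    · rw [hm, hK.1] at hmem; exact hmem
    · rw [hm, hK.2] at hmem; exact hmem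
  have := congrArg (fun z => t.prod * z * t.prod⁻¹) h1
  simpa [mul_assoc] using this

lemma main_induction (hA : IsAmalgam G₀ G₁ H) (hnd : Nondegenerate G₀ G₁ H)
    (hK : KK G₀ G₁ H 0 = {1} ∧ KK G₀ G₁ H 1 = {1}) (F : Finset G) :
    (1 : G) ∉ F → ∀ (t : List G) (j : ℕ), AltW G₀ G₁ H j t →
      ∃ c ∈ Cone G₀ G₁ H t j, ∀ x ∈ F, c⁻¹ * x * c ∉ H := by
  classical
  induction F using Finset.induction_on with
  | empty =>
    intro _ t j _
    exact ⟨t.prod, self_mem_cone, by simp⟩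
  | @insert x F hxF ih =>
    intro h1F t j ht
    have hx1 : x ≠ 1 := fun h => h1F (h ▸ Finset.mem_insert_self x F)
    have h1F' : (1 : G) ∉ F := fun h => h1F (Finset.mem_insert_of_mem h)
    obtain ⟨tb, s, s', htb, hsub, hs, hs', hss'⟩ := exists_branch hA hnd t j ht
    have hvs : AltW G₀ G₁ H (tb.length + j) [s] := ⟨hs, trivial⟩
    have hvs' : AltW G₀ G₁ H (tb.length + j) [s'] := ⟨hs', trivial⟩
    have hnilδ : AltW G₀ G₁ H (tb.length + 1 + j) ([] : List G) := trivial
    have hts : AltW G₀ G₁ H j (tb ++ [s]) := altW_append htb hvs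
    have hts' : AltW G₀ G₁ H j (tb ++ [s']) := altW_append htb hvs'
    -- find an unfixed edge in the cone beyond tb ++ [s]
    have hnotall : ¬ ∀ c ∈ Cone G₀ G₁ H (tb ++ [s]) j, c⁻¹ * x * c ∈ H := by
      intro hfix
      exact hx1 (eq_one_of_mem_KK hA hK hfix)
    push_neg at hnotall
    obtain ⟨c₁, hc₁mem, hc₁⟩ := hnotall
    obtain ⟨γ, hg, hγ, hgH, rfl⟩ := hc₁mem
    have hγ' : AltW G₀ G₁ H (tb.length + 1 + j) γ := by
      refine altW_congr (j := (tb ++ [s]).length + j) ?_ hγ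
      simp only [List.length_append, List.length_cons, List.length_nil]
    have ht₁ : AltW G₀ G₁ H j (tb ++ [s] ++ γ) := altW_append hts hγ
    -- x does not fix the root edge of the cone beyond tb ++ [s] ++ γ
    have hroot : (tb ++ [s] ++ γ).prod⁻¹ * x * (tb ++ [s] ++ γ).prod ∉ H := by
      intro hcon
      apply hc₁
      have hpe : (tb ++ [s]).prod * γ.prod * hg = (tb ++ [s] ++ γ).prod * hg := by
        simp [List.prod_append, List.prod_cons, mul_assoc]
      rw [hpe, conj_h_iff hgH]
      exact hcon
    -- dichotomy: one of the two cones is entirely unfixed by x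
    have hdich : (∀ c ∈ Cone G₀ G₁ H (tb ++ [s] ++ γ) j, c⁻¹ * x * c ∉ H) ∨
        (∀ c ∈ Cone G₀ G₁ H (tb ++ [s']) j, c⁻¹ * x * c ∉ H) := by
      by_cases hL : ∀ c ∈ Cone G₀ G₁ H (tb ++ [s] ++ γ) j, c⁻¹ * x * c ∉ H
      · exact Or.inl hL
      · push_neg at hL
        obtain ⟨c₁', hc₁'mem, hc₁'⟩ := hL
        obtain ⟨u, hu1, huA, hu1H, rfl⟩ := hc₁'mem
        have h1 : ((tb ++ [s] ++ γ).prod * u.prod)⁻¹ * x *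
            ((tb ++ [s] ++ γ).prod * u.prod) ∈ H := by
          rw [← conj_h_iff (g := (tb ++ [s] ++ γ).prod * u.prod) hu1H]
          have : (tb ++ [s] ++ γ).prod * u.prod * hu1
              = (tb ++ [s] ++ γ).prod * List.prod u * hu1 := rfl
          exact hc₁'
        refine Or.inr fun c₂ hc₂mem => ?_
        intro hc₂
        obtain ⟨u', hu'1, hu'A, hu'1H, rfl⟩ := hc₂mem
        have h2 : ((tb ++ [s'] ++ ([] : List G)).prod * u'.prod)⁻¹ * x *
            ((tb ++ [s'] ++ ([] : List G)).prod * u'.prod) ∈ H := by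
          simp only [List.append_nil]
          rw [← conj_h_iff (g := (tb ++ [s']).prod * u'.prod) hu'1H]
          exact hc₂
        have hu'A' : AltW G₀ G₁ H ((tb ++ [s'] ++ ([] : List G)).length + j) u' := by
          refine altW_congr (j := (tb ++ [s']).length + j) ?_ hu'A
          simp only [List.length_append, List.length_cons, List.length_nil]
        have hcontra := convexity hA hs hs' hss' hγ' hnilδ huA hu'A' h1 h2
        exact hroot hcontra
    rcases hdich with hgood | hgood
    · obtain ⟨c, hcmem, hcF⟩ := ih h1F' (tb ++ [s] ++ γ) j ht₁
      refine ⟨c, ?_, ?_⟩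
      · exact hsub (cone_mono hvs (cone_mono hγ hcmem))
      · intro y hy
        rcases Finset.mem_insert.mp hy with rfl | hyF
        · exact hgood c hcmem
        · exact hcF y hyF
    · obtain ⟨c, hcmem, hcF⟩ := ih h1F' (tb ++ [s']) j hts'
      refine ⟨c, hsub (cone_mono hvs' hcmem), ?_⟩
      intro y hy
      rcases Finset.mem_insert.mp hy with rfl | hyF
      · exact hgood c hcmem
      · exact hcF y hyF

end AmalgamAux
namespace AmalgamAux

variable {G : Type*} [Group G] {G₀ G₁ H : Subgroup G}

lemma KK_spec {x : G} {i : ℕ} (hx : x ∈ KK G₀ G₁ H i) {k : ℕ} {g : G}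
    (hg : g ∈ TT G₀ G₁ H i k) : g⁻¹ * x * g ∈ H :=
  Set.mem_iInter₂.mp (Set.mem_iInter.mp hx k) g hg

lemma one_mem_KK {i : ℕ} : (1 : G) ∈ KK G₀ G₁ H i := by
  refine Set.mem_iInter.mpr fun k => Set.mem_iInter₂.mpr fun g _ => ?_
  simp only [Set.mem_setOf_eq, mul_one]
  simpa using H.one_mem

lemma KK_sub_H {x : G} {i : ℕ} (hx : x ∈ KK G₀ G₁ H i) : x ∈ H := by
  have : (1 : G) ∈ TT G₀ G₁ H i 0 := by
    simp only [TT, if_pos rfl, SetLike.mem_coe]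
    exact H.one_mem
  have := KK_spec hx this
  simpa using this

lemma conj_mem_KK (hA : IsAmalgam G₀ G₁ H) {x s₀ : G} {i i' : ℕ} (hne : i % 2 ≠ i' % 2)
    (hs₀ : Letter G₀ G₁ H i s₀) (hx : x ∈ KK G₀ G₁ H i) :
    s₀ * x * s₀⁻¹ ∈ KK G₀ G₁ H i' := by
  refine Set.mem_iInter.mpr fun k => Set.mem_iInter₂.mpr fun g hg => ?_
  by_cases hk : k = 0
  · subst hk
    simp only [TT, if_pos rfl, SetLike.mem_coe] at hg
    have hmem : s₀⁻¹ * g ∈ TT G₀ G₁ H i 1 := by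
      simp only [TT, if_neg (by omega : (1:ℕ) ≠ 0)]
      exact ⟨[s₀⁻¹ * g], rfl, altWord_iff.mpr ⟨hs₀.inv.mul_right hA hg, trivial⟩, by simp⟩
    have := KK_spec hx hmem
    have hEq : (s₀⁻¹ * g)⁻¹ * x * (s₀⁻¹ * g) = g⁻¹ * (s₀ * x * s₀⁻¹) * g := by group
    rwa [hEq] at this
  · simp only [TT, if_neg hk] at hg
    obtain ⟨w, hlen, hW, rfl⟩ := hg
    have hmem : s₀⁻¹ * w.prod ∈ TT G₀ G₁ H i (k + 1) := by
      simp only [TT, if_neg (by omega : k + 1 ≠ 0)]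
      refine ⟨s₀⁻¹ :: w, by simp [hlen], altWord_iff.mpr ?_, by simp⟩
      exact ⟨hs₀.inv, altW_congr (j := i') (by omega) (altWord_iff.mp hW)⟩
    have := KK_spec hx hmem
    have hEq : (s₀⁻¹ * w.prod)⁻¹ * x * (s₀⁻¹ * w.prod)
        = w.prod⁻¹ * (s₀ * x * s₀⁻¹) * w.prod := by group
    rwa [hEq] at this

end AmalgamAux

open AmalgamAux in
/-- Let `G = G₀ *_H G₁` be a nondegenerate free product with amalgamation. Then the
following are equivalent:
(i) `K₀ = K₁ = {e}`;
(ii) for every finite subset `F ⊆ G \ {e}` there exists `g ∈ G` with `g F g⁻¹ ∩ H = ∅`;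
(iii) for every finite subset `F ⊆ H \ {e}` there exists `g ∈ G` with `g F g⁻¹ ∩ H = ∅`. -/
theorem trivial_Ks_tfae {G : Type*} [Group G] (G₀ G₁ H : Subgroup G)
    (ha : IsAmalgam G₀ G₁ H) (hnd : Nondegenerate G₀ G₁ H) :
    List.TFAE
      [ KK G₀ G₁ H 0 = {1} ∧ KK G₀ G₁ H 1 = {1},
        ∀ F : Finset G, (1 : G) ∉ F →
          ∃ g : G, ((fun x => g * x * g⁻¹) '' (F : Set G)) ∩ (H : Set G) = ∅,
        ∀ F : Finset G, (F : Set G) ⊆ (H : Set G) \ {1} →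
          ∃ g : G, ((fun x => g * x * g⁻¹) '' (F : Set G)) ∩ (H : Set G) = ∅ ] := by
  classical
  tfae_have 1 → 2 := by
    intro hK F h1F
    obtain ⟨c, _, hcF⟩ := main_induction ha hnd hK F h1F ([] : List G) 0 trivial
    refine ⟨c⁻¹, Set.eq_empty_iff_forall_notMem.mpr ?_⟩
    rintro z ⟨⟨y, hyF, rfl⟩, hzH⟩
    exact hcF y (Finset.mem_coe.mp hyF) (by simpa using hzH)
  tfae_have 2 → 3 := by
    intro h2 F hF
    refine h2 F fun h1 => ?_
    exact (hF (Finset.mem_coe.mpr h1)).2 rfl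
  tfae_have 3 → 1 := by
    intro h3
    have hGm : ∀ m : ℕ, H.relIndex (Gm G₀ G₁ m) ≠ 1 := by
      intro m; unfold Gm; split
      · exact hnd.1
      · exact hnd.2.1
    have key : ∀ i i' : ℕ, i < 2 → i' < 2 → i ≠ i' → ∀ x ∈ KK G₀ G₁ H i, x = 1 := by
      intro i i' hi hi' hii' x hx
      by_contra hx1
      obtain ⟨s₀, hs₀⟩ := exists_letter (G₀ := G₀) (G₁ := G₁) (hGm i)
      have hy : s₀ * x * s₀⁻¹ ∈ KK G₀ G₁ H i' := conj_mem_KK ha (by omega) hs₀ hx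
      have hxH : x ∈ H := KK_sub_H hx
      have hyH : s₀ * x * s₀⁻¹ ∈ H := KK_sub_H hy
      have hy1 : s₀ * x * s₀⁻¹ ≠ 1 := by
        intro hcon
        apply hx1
        have := congrArg (fun z => s₀⁻¹ * z * s₀) hcon
        simpa [mul_assoc] using this
      set F : Finset G := {x, s₀ * x * s₀⁻¹} with hF
      have hFsub : (F : Set G) ⊆ (H : Set G) \ {1} := by
        intro z hz
        simp only [hF, Finset.coe_insert, Finset.coe_singleton, Set.mem_insert_iff,
          Set.mem_singleton_iff] at hz
        rcases hz with rfl | rfl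
        · exact ⟨hxH, hx1⟩
        · exact ⟨hyH, hy1⟩
      obtain ⟨g, hg⟩ := h3 F hFsub
      have hgx : g * x * g⁻¹ ∉ H := by
        intro hmem
        refine Set.eq_empty_iff_forall_notMem.mp hg (g * x * g⁻¹) ⟨⟨x, ?_, rfl⟩, hmem⟩
        simp [hF]
      have hgy : g * (s₀ * x * s₀⁻¹) * g⁻¹ ∉ H := by
        intro hmem
        refine Set.eq_empty_iff_forall_notMem.mp hg (g * (s₀ * x * s₀⁻¹) * g⁻¹)
          ⟨⟨s₀ * x * s₀⁻¹, ?_, rfl⟩, hmem⟩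
        simp [hF]
      rcases nf_univ ha g⁻¹ with hdH | ⟨jj, w, hne, hw, hdw⟩
      · refine hgx ?_
        have hgH : g ∈ H := by simpa using inv_mem hdH
        exact mul_mem (mul_mem hgH hxH) (inv_mem hgH)
      · have hwT : g⁻¹ ∈ TT G₀ G₁ H (jj % 2) w.length := by
          simp only [TT, if_neg (by simpa using hne : w.length ≠ 0)]
          exact ⟨w, rfl, altWord_iff.mpr (altW_congr (by omega) hw), hdw.symm⟩
        have hcase : jj % 2 = i ∨ jj % 2 = i' := by omega
        rcases hcase with hj | hj
        · rw [hj] at hwT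
          have := KK_spec hx hwT
          refine hgx ?_
          have hEq : (g⁻¹)⁻¹ * x * g⁻¹ = g * x * g⁻¹ := by group
          rwa [hEq] at this
        · rw [hj] at hwT
          have := KK_spec hy hwT
          refine hgy ?_
          have hEq : (g⁻¹)⁻¹ * (s₀ * x * s₀⁻¹) * g⁻¹ = g * (s₀ * x * s₀⁻¹) * g⁻¹ := by group
          rwa [hEq] at this
    constructor
    · refine Set.eq_singleton_iff_unique_mem.mpr ⟨one_mem_KK, fun x hx => ?_⟩
      exact key 0 1 (by omega) (by omega) (by omega) x hx
    · refine Set.eq_singleton_iff_unique_mem.mpr ⟨one_mem_KK, fun x hx => ?_⟩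
      exact key 1 0 (by omega) (by omega) (by omega) x hx
  tfae_finish
end

section
/- Let G = G₀ *_H G₁ be a nondegenerate free product with amalgamation such that for every finite subset F ⊆ G \ {e} there exists g ∈ G with gFg⁻¹ ∩ H = ∅. Then G is a Powers group and G has the free semigroup property. -/
variable {G : Type*} [Group G]

/-- A group `G` is a *Powers group* if for every finite subset `F` of `G \ {e}` and every
integer `k ≥ 1` there exist a partition `G = D ⊔ E` and elements `g 1, …, g k ∈ G` such that
`f D ∩ D = ∅` for all `f ∈ F` and `g i E ∩ g j E = ∅` for all distinct `1 ≤ i, j ≤ k`. -/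
def IsPowersGroup (G : Type*) [Group G] : Prop :=
  ∀ F : Finset G, (1 : G) ∉ F → ∀ k : ℕ, 1 ≤ k →
    ∃ (D E : Set G) (g : ℕ → G),
      D ∪ E = Set.univ ∧ D ∩ E = ∅ ∧
      (∀ f ∈ F, ((fun x => f * x) '' D) ∩ D = ∅) ∧
      (∀ i j, 1 ≤ i → i ≤ k → 1 ≤ j → j ≤ k → i ≠ j →
        ((fun x => g i * x) '' E) ∩ ((fun x => g j * x) '' E) = ∅)

/-- A group `G` has the *free semigroup property* if for every finite subset `F` of `G`
there exists `g ∈ G` such that `g F` is semifree: distinct nonempty formal words in the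
elements of `g F` define distinct elements of `G`. -/
def HasFreeSemigroupProperty (G : Type*) [Group G] : Prop :=
  ∀ F : Finset G, ∃ g : G,
    ∀ w₁ w₂ : List G, w₁ ≠ [] → w₂ ≠ [] →
      (∀ x ∈ w₁, x ∈ (fun f => g * f) '' (F : Set G)) →
      (∀ x ∈ w₂, x ∈ (fun f => g * f) '' (F : Set G)) →
      w₁.prod = w₂.prod → w₁ = w₂


namespace Work

variable (G₀ G₁ H : Subgroup G)

/-- the factor subgroup at parity `j` -/
def SS (j : ℕ) : Subgroup G := if j % 2 = 0 then G₀ else G₁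

/-- alternating word, cons form -/
def Alt : ℕ → List G → Prop
  | _, [] => True
  | j, x :: w => (x ∈ SS G₀ G₁ j ∧ x ∉ H) ∧ Alt (j+1) w

variable {G₀ G₁ H}

@[simp] lemma alt_nil (j : ℕ) : Alt G₀ G₁ H j ([] : List G) := trivial

@[simp] lemma alt_cons {j : ℕ} {x : G} {w : List G} :
    Alt G₀ G₁ H j (x :: w) ↔ (x ∈ SS G₀ G₁ j ∧ x ∉ H) ∧ Alt G₀ G₁ H (j+1) w := Iff.rfl

lemma SS_parity {j k : ℕ} (h : j % 2 = k % 2) : SS G₀ G₁ j = SS G₀ G₁ k := by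
  unfold SS; rw [h]

lemma alt_parity {j k : ℕ} (h : j % 2 = k % 2) {w : List G} (hw : Alt G₀ G₁ H j w) :
    Alt G₀ G₁ H k w := by
  induction w generalizing j k with
  | nil => trivial
  | cons x t ih =>
    rw [alt_cons] at hw ⊢
    refine ⟨⟨?_, hw.1.2⟩, ih (by omega) hw.2⟩
    have h1 := hw.1.1
    rwa [SS_parity h] at h1

lemma alt_append {j : ℕ} {w v : List G} (hw : Alt G₀ G₁ H j w)
    (hv : Alt G₀ G₁ H (j + w.length) v) : Alt G₀ G₁ H j (w ++ v) := by
  induction w generalizing j with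
  | nil => simpa using hv
  | cons x t ih =>
    rw [List.cons_append, alt_cons]
    rw [alt_cons] at hw
    refine ⟨hw.1, ih hw.2 ?_⟩
    exact alt_parity (j := j + (x :: t).length) (by simp; omega) hv

lemma alt_append_iff {j : ℕ} {w v : List G} :
    Alt G₀ G₁ H j (w ++ v) ↔ Alt G₀ G₁ H j w ∧ Alt G₀ G₁ H (j + w.length) v := by
  constructor
  · intro h
    induction w generalizing j with
    | nil => simpa using h
    | cons x t ih =>
      rw [List.cons_append, alt_cons] at h
      obtain ⟨h1, h2⟩ := h
      obtain ⟨h3, h4⟩ := ih h2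
      exact ⟨⟨h1, h3⟩, alt_parity (by simp; omega) h4⟩
  · rintro ⟨h1, h2⟩; exact alt_append h1 h2

lemma alt_singleton {j : ℕ} {x : G} :
    Alt G₀ G₁ H j [x] ↔ x ∈ SS G₀ G₁ j ∧ x ∉ H := by simp

lemma alt_snoc {j : ℕ} {w : List G} {a : G} :
    Alt G₀ G₁ H j (w ++ [a]) ↔
      Alt G₀ G₁ H j w ∧ (a ∈ SS G₀ G₁ (j + w.length) ∧ a ∉ H) := by
  rw [alt_append_iff, alt_singleton]

lemma alt_take {j : ℕ} {w : List G} (h : Alt G₀ G₁ H j w) (n : ℕ) :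
    Alt G₀ G₁ H j (w.take n) := by
  conv at h => rw [← List.take_append_drop n w]
  exact (alt_append_iff.1 h).1

lemma alt_drop {j : ℕ} {w : List G} (h : Alt G₀ G₁ H j w) (n : ℕ) :
    Alt G₀ G₁ H (j + (w.take n).length) (w.drop n) := by
  conv at h => rw [← List.take_append_drop n w]
  exact (alt_append_iff.1 h).2

lemma alt_get {j : ℕ} {w : List G} (h : Alt G₀ G₁ H j w) (i : ℕ) (hi : i < w.length) :
    w[i] ∈ SS G₀ G₁ (i + j) ∧ w[i] ∉ H := by
  induction w generalizing j i with
  | nil => simp at hi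
  | cons x t ih =>
    rw [alt_cons] at h
    cases i with
    | zero => simpa using h.1
    | succ m =>
      simp only [List.getElem_cons_succ]
      obtain ⟨h1, h2⟩ := ih h.2 m (by simpa using hi)
      exact ⟨by rwa [SS_parity (show (m + (j+1)) % 2 = (m + 1 + j) % 2 by omega)] at h1, h2⟩

/-- bridge to the pinned `AltWord` -/
lemma alt_altWord {j : ℕ} {w : List G} (h : Alt G₀ G₁ H j w) : AltWord G₀ G₁ H j w := by
  intro i hi
  have := alt_get h i hi
  have hSet : ((SS G₀ G₁ (i+j) : Subgroup G) : Set G)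
      = (if (i + j) % 2 = 0 then (G₀ : Set G) else (G₁ : Set G)) := by
    unfold SS; split <;> rfl
  refine ⟨?_, this.2⟩
  rw [← hSet]
  simpa using this.1


section Amalgam

variable (ha : IsAmalgam G₀ G₁ H)
include ha

lemma H_le_SS (j : ℕ) : H ≤ SS G₀ G₁ j := by
  unfold SS; split
  · exact ha.le_left
  · exact ha.le_right

lemma mem_of_both (x : G) (h0 : x ∈ G₀) (h1 : x ∈ G₁) : x ∈ H := by
  rw [← ha.inf_eq]; exact ⟨h0, h1⟩

lemma notP {j : ℕ} {w : List G} (hw : Alt G₀ G₁ H j w) (hne : w ≠ []) :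
    w.prod ∉ H := ha.reduced j w hne (alt_altWord hw)

/-- The cancellation engine. -/
lemma engine : ∀ (n : ℕ) (w' v' : List G) (a b : G) (j m : ℕ), w'.length ≤ n →
    Alt G₀ G₁ H j (w' ++ [a]) → Alt G₀ G₁ H m (b :: v') →
    ((w' ++ [a]).prod * (b :: v').prod ∈ H) →
    (w'.length + j) % 2 = m % 2 ∧ w'.length = v'.length ∧ a * b ∈ H := by
  intro n
  induction n with
  | zero =>
    intro w' v' a b j m hlen hw hv hH
    have hw' : w' = [] := List.length_eq_zero_iff.1 (by omega)
    subst hw'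
    -- parity
    have hpar : (0 + j) % 2 = m % 2 := by
      by_contra hpar
      have hpar2 : (j + 1) % 2 = m % 2 := by omega
      have hcat : Alt G₀ G₁ H j (([] ++ [a]) ++ (b :: v')) := by
        refine alt_append hw (alt_parity ?_ hv)
        simp; omega
      exact notP ha hcat (by simp) (by simpa [List.prod_append, mul_assoc] using hH)
    have ha' : a ∈ SS G₀ G₁ j ∧ a ∉ H := by simpa using (alt_snoc.1 hw).2
    obtain ⟨hb1, hb2⟩ : b ∈ SS G₀ G₁ m ∧ b ∉ H := (alt_cons.1 hv).1
    have hcSS : a * b ∈ SS G₀ G₁ j := by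
      refine mul_mem ha'.1 ?_
      rwa [SS_parity (show m % 2 = j % 2 by omega)] at hb1
    have hcH : a * b ∈ H := by
      by_contra hcH
      have hcat : Alt G₀ G₁ H j ((a * b) :: v') := by
        rw [alt_cons]
        refine ⟨⟨hcSS, hcH⟩, alt_parity ?_ (alt_cons.1 hv).2⟩
        omega
      refine notP ha hcat (by simp) ?_
      have : ((a*b) :: v').prod = ([] ++ [a]).prod * (b :: v').prod := by
        simp [mul_assoc]
      rwa [this]
    refine ⟨hpar, ?_, hcH⟩
    -- v' must be []
    cases v' with
    | nil => rfl
    | cons d v'' =>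
      exfalso
      have hv'' : Alt G₀ G₁ H (m+1) (d :: v'') := (alt_cons.1 hv).2
      have : (d :: v'').prod ∈ H := by
        have h2 : (a*b) * (d :: v'').prod ∈ H := by
          have : ([] ++ [a]).prod * (b :: (d :: v'')).prod = (a*b) * (d :: v'').prod := by
            simp [mul_assoc]
          rwa [this] at hH
        have := mul_mem (inv_mem hcH) h2
        simpa [mul_assoc] using this
      exact notP ha hv'' (by simp) this
  | succ n ih =>
    intro w' v' a b j m hlen hw hv hH
    rcases List.eq_nil_or_concat w' with hw' | ⟨w'', a', hconc⟩
    · subst hw'; exact ih [] v' a b j m (by simp) hw hv hH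
    rw [List.concat_eq_append] at hconc
    subst hconc
    -- parity first
    have hpar : ((w'' ++ [a']).length + j) % 2 = m % 2 := by
      by_contra hpar
      have hcat : Alt G₀ G₁ H j (((w'' ++ [a']) ++ [a]) ++ (b :: v')) := by
        refine alt_append hw (alt_parity ?_ hv)
        simp at hpar ⊢; omega
      exact notP ha hcat (by simp) (by simpa [List.prod_append, mul_assoc] using hH)
    have ha' : a ∈ SS G₀ G₁ (j + (w''++[a']).length) ∧ a ∉ H := (alt_snoc.1 hw).2
    obtain ⟨hb1, hb2⟩ : b ∈ SS G₀ G₁ m ∧ b ∉ H := (alt_cons.1 hv).1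
    have hcSS : a * b ∈ SS G₀ G₁ (j + (w''++[a']).length) := by
      refine mul_mem ha'.1 ?_
      rwa [SS_parity (show m % 2 = (j + (w''++[a']).length) % 2 by simp at hpar ⊢; omega)] at hb1
    have hcH : a * b ∈ H := by
      by_contra hcH
      have hcat : Alt G₀ G₁ H j ((w'' ++ [a']) ++ ((a*b) :: v')) := by
        refine alt_append (alt_snoc.1 hw).1 ?_
        rw [alt_cons]
        refine ⟨⟨hcSS, hcH⟩, alt_parity ?_ (alt_cons.1 hv).2⟩
        simp at hpar ⊢; omega
      refine notP ha hcat (by simp) ?_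
      have : ((w'' ++ [a']) ++ ((a*b) :: v')).prod
          = ((w'' ++ [a']) ++ [a]).prod * (b :: v').prod := by
        simp [List.prod_append, mul_assoc]
      rwa [this]
    refine ⟨hpar, ?_, hcH⟩
    cases v' with
    | nil =>
      exfalso
      have hwalt : Alt G₀ G₁ H j (w'' ++ [a']) := (alt_snoc.1 hw).1
      have : (w'' ++ [a']).prod ∈ H := by
        have h2 : (w'' ++ [a']).prod * (a*b) ∈ H := by
          have : ((w'' ++ [a']) ++ [a]).prod * ([b] : List G).prod
              = (w'' ++ [a']).prod * (a*b) := by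
            simp [List.prod_append, mul_assoc]
          rwa [this] at hH
        have := mul_mem h2 (inv_mem hcH)
        simpa [mul_assoc] using this
      exact notP ha hwalt (by simp) this
    | cons d v'' =>
      have hd : d ∈ SS G₀ G₁ (m+1) ∧ d ∉ H := (alt_cons.1 (alt_cons.1 hv).2).1
      have hcd : (a*b) * d ∈ SS G₀ G₁ (m+1) ∧ (a*b)*d ∉ H := by
        constructor
        · exact mul_mem (H_le_SS ha (m+1) hcH) hd.1
        · intro hmem
          exact hd.2 (by simpa [mul_assoc] using mul_mem (inv_mem hcH) hmem)
      have hrec := ih w'' v'' a' ((a*b)*d) j (m+1) (by simp at hlen; omega)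
        (alt_snoc.1 hw).1
        (by rw [alt_cons]; exact ⟨hcd, (alt_cons.1 (alt_cons.1 hv).2).2⟩)
        (by
          have : (w'' ++ [a']).prod * (((a*b)*d) :: v'').prod
              = ((w'' ++ [a']) ++ [a]).prod * (b :: (d :: v'')).prod := by
            simp [List.prod_append, mul_assoc]
          rw [this]; exact hH)
      simp only [List.length_cons, List.length_append, List.length_singleton, List.length_nil] at hrec ⊢
      omega


omit ha in
lemma invRev_alt {j : ℕ} {w : List G} (hw : Alt G₀ G₁ H j w) :
    Alt G₀ G₁ H (j + w.length + 1) ((w.map fun x => x⁻¹).reverse) := by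
  induction w generalizing j with
  | nil => simp
  | cons x t ih =>
    simp only [List.map_cons, List.reverse_cons]
    rw [alt_cons] at hw
    rw [alt_snoc]
    refine ⟨alt_parity (by simp; omega) (ih hw.2), ?_, fun hmem => hw.1.2 (by simpa using inv_mem hmem)⟩
    rw [SS_parity (show (j + (x :: t).length + 1 + ((t.map fun x => x⁻¹).reverse).length) % 2 = j % 2 by simp; omega)]
    exact inv_mem hw.1.1

omit ha in
lemma invRev_prod (w : List G) : ((w.map fun x => x⁻¹).reverse).prod = w.prod⁻¹ :=
  (List.prod_inv_reverse w).symm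

/-- length and type uniqueness for reduced words -/
lemma cor_len {j m : ℕ} {w v : List G} (hw : Alt G₀ G₁ H j w) (hv : Alt G₀ G₁ H m v)
    (hwne : w ≠ []) (hvne : v ≠ []) (hp : w.prod = v.prod) :
    w.length = v.length ∧ j % 2 = m % 2 := by
  rcases List.eq_nil_or_concat w with rfl | ⟨w', a, hconc⟩
  · exact absurd rfl hwne
  rw [List.concat_eq_append] at hconc; subst hconc
  have hR : Alt G₀ G₁ H (m + v.length + 1) ((v.map fun x => x⁻¹).reverse) := invRev_alt hv
  rcases List.exists_cons_of_ne_nil (show (v.map fun x => x⁻¹).reverse ≠ [] by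
    simpa using hvne) with ⟨b, v', hBv⟩
  have hlenB : v'.length + 1 = v.length := by
    have := congrArg List.length hBv; simpa using this.symm
  have hprod : ((w' ++ [a]).prod * (b :: v').prod ∈ H) := by
    rw [← hBv, invRev_prod, hp]
    simpa using one_mem H
  have := engine ha w'.length w' v' a b j (m + v.length + 1) le_rfl hw (hBv ▸ hR) hprod
  constructor
  · simp only [List.length_append, List.length_cons, List.length_nil]; omega
  · have h1 := this.1
    have h2 := this.2.1
    have : w'.length + 1 = v.length := by omega
    omega

/-- prefix coset rigidity -/
lemma cor3 {j : ℕ} {w v : List G} (hw : Alt G₀ G₁ H j w) (hv : Alt G₀ G₁ H j v)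
    (hp : w.prod = v.prod) : ∀ n, n ≤ w.length →
    ((w.take n).prod)⁻¹ * (v.take n).prod ∈ H := by
  intro n
  induction n with
  | zero => intro _; simpa using one_mem H
  | succ n IH =>
    intro hn
    have hwne : w ≠ [] := by intro h; subst h; simp at hn
    have hvne : v ≠ [] := by
      intro h; subst h
      refine notP ha hw hwne ?_
      rw [hp]; simpa using one_mem H
    have hlen : w.length = v.length := (cor_len ha hw hv hwne hvne hp).1
    have hκ := IH (by omega)
    have hnw : n < w.length := by omega
    have hnv : n < v.length := by omega
    have htw : w.take (n+1) = w.take n ++ [w[n]] := by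
      rw [List.take_succ, List.getElem?_eq_getElem hnw]; rfl
    have htv : v.take (n+1) = v.take n ++ [v[n]] := by
      rw [List.take_succ, List.getElem?_eq_getElem hnv]; rfl
    rw [htw, htv]
    set α := w[n] with hα
    set β := v[n] with hβ
    set κ := ((w.take n).prod)⁻¹ * (v.take n).prod with hκdef
    have hgoal_iff : ((w.take n ++ [α]).prod)⁻¹ * (v.take n ++ [β]).prod
        = α⁻¹ * κ * β := by
      simp [List.prod_append, hκdef, mul_assoc]
    rw [hgoal_iff]
    by_contra hd
    set d := α⁻¹ * κ * β with hddef
    have hαm := alt_get hw n hnw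
    have hβm := alt_get hv n hnv
    have hdSS : d ∈ SS G₀ G₁ (n + j) := by
      exact mul_mem (mul_mem (inv_mem hαm.1) (H_le_SS ha (n+j) hκ)) hβm.1
    -- drop equation
    have hkey : (w.drop (n+1)).prod = d * (v.drop (n+1)).prod := by
      have hw2 : (w.take (n+1)).prod * (w.drop (n+1)).prod = w.prod := by
        rw [← List.prod_append, List.take_append_drop]
      have hv2 : (v.take (n+1)).prod * (v.drop (n+1)).prod = v.prod := by
        rw [← List.prod_append, List.take_append_drop]
      have : (w.take (n+1)).prod * (w.drop (n+1)).prod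
          = (v.take (n+1)).prod * (v.drop (n+1)).prod := by rw [hw2, hv2, hp]
      have hexp : d = ((w.take (n+1)).prod)⁻¹ * (v.take (n+1)).prod := by
        rw [htw, htv]
        simp [hddef, hκdef, List.prod_append, mul_assoc]
      apply mul_left_cancel (a := (w.take (n + 1)).prod)
      rw [hw2, hexp, hp, ← hv2]
      simp [mul_assoc]
    rcases Nat.lt_or_ge (n+1) w.length with hlt | hge
    · -- engine contradiction
      have hdropw : Alt G₀ G₁ H (j + (n+1)) (w.drop (n+1)) := by
        have := alt_drop hw (n+1)
        rwa [List.length_take, min_eq_left (by omega)] at this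
      have hdropv : Alt G₀ G₁ H (j + (n+1)) (v.drop (n+1)) := by
        have := alt_drop hv (n+1)
        rwa [List.length_take, min_eq_left (by omega)] at this
      have hcons : Alt G₀ G₁ H (n + j) (d :: v.drop (n+1)) := by
        rw [alt_cons]
        exact ⟨⟨hdSS, hd⟩, alt_parity (by omega) hdropv⟩
      have hB := invRev_alt hcons
      rcases List.exists_cons_of_ne_nil (show ((d :: v.drop (n+1)).map fun x => x⁻¹).reverse ≠ [] by simp) with ⟨b₂, v₂, hBv⟩
      rcases List.eq_nil_or_concat (w.drop (n+1)) with hnil | ⟨w₂, a₂, hconc⟩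
      · have : w.length ≤ n + 1 := by
          have := congrArg List.length hnil; simp at this; omega
        omega
      rw [List.concat_eq_append] at hconc
      have hprod2 : ((w₂ ++ [a₂]).prod * (b₂ :: v₂).prod ∈ H) := by
        rw [← hBv, ← hconc, invRev_prod, hkey]
        simpa [mul_assoc] using one_mem H
      have heng := engine ha w₂.length w₂ v₂ a₂ b₂ (j + (n+1))
        ((n+j) + (d :: v.drop (n+1)).length + 1) le_rfl (hconc ▸ hdropw) (hBv ▸ hB) hprod2
      have hL1 : w₂.length + 1 = w.length - (n+1) := by
        have := congrArg List.length hconc; simp at this; omega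
      have hL2 : v₂.length + 1 = (d :: v.drop (n+1)).length := by
        have h5 := congrArg List.length hBv
        simp only [List.length_reverse, List.length_map, List.length_cons] at h5 ⊢
        omega
      have hL3 : (d :: v.drop (n+1)).length = v.length - (n+1) + 1 := by simp
      omega
    · -- n+1 = w.length : drops empty, d = 1 ∈ H
      have h1 : w.drop (n+1) = [] := List.drop_eq_nil_of_le (by omega)
      have h2 : v.drop (n+1) = [] := List.drop_eq_nil_of_le (by omega)
      rw [h1, h2] at hkey
      simp at hkey
      exact hd (hkey ▸ one_mem H)

/-- totality: every element is in `H` or represented by a reduced word -/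
lemma tot (x : G) :
    x ∈ H ∨ (∃ w, Alt G₀ G₁ H 0 w ∧ w ≠ [] ∧ w.prod = x) ∨
      (∃ w, Alt G₀ G₁ H 1 w ∧ w ≠ [] ∧ w.prod = x) := by
  have hx : x ∈ Subgroup.closure ((G₀ : Set G) ∪ (G₁ : Set G)) := by
    rw [ha.closure_eq_top]; trivial
  set P : G → Prop := fun x => x ∈ H ∨ (∃ w, Alt G₀ G₁ H 0 w ∧ w ≠ [] ∧ w.prod = x) ∨
      (∃ w, Alt G₀ G₁ H 1 w ∧ w ≠ [] ∧ w.prod = x) with hP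
  -- right multiplication step
  have step : ∀ y : G, P y → ∀ g, g ∈ (G₀ : Set G) ∪ (G₁ : Set G) → P (y * g) := by
    intro y hy g hg
    by_cases hgH : g ∈ H
    · -- multiply by an element of H
      rcases hy with hyH | hrep
      · exact Or.inl (mul_mem hyH hgH)
      · right
        have key : ∀ (j : ℕ) (w : List G), Alt G₀ G₁ H j w → w ≠ [] → w.prod = y →
            ∃ w', Alt G₀ G₁ H j w' ∧ w' ≠ [] ∧ w'.prod = y * g := by
          intro j w hw hne hp
          rcases List.eq_nil_or_concat w with rfl | ⟨w', c, hconc⟩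
          · exact absurd rfl hne
          rw [List.concat_eq_append] at hconc; subst hconc
          refine ⟨w' ++ [c * g], ?_, by simp, ?_⟩
          · rw [alt_snoc] at hw ⊢
            refine ⟨hw.1, mul_mem hw.2.1 (H_le_SS ha _ hgH), fun hmem => hw.2.2 ?_⟩
            have : c * g * g⁻¹ ∈ H := mul_mem hmem (inv_mem hgH)
            simpa using this
          · rw [← hp]; simp [List.prod_append, mul_assoc]
        rcases hrep with ⟨w, h1, h2, h3⟩ | ⟨w, h1, h2, h3⟩
        · exact Or.inl (key 0 w h1 h2 h3)
        · exact Or.inr (key 1 w h1 h2 h3)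
    · -- g ∉ H : real letter
      have hgfac : ∃ ε : ℕ, ε ≤ 1 ∧ g ∈ SS G₀ G₁ ε := by
        rcases hg with h | h
        · exact ⟨0, by omega, by unfold SS; simpa using h⟩
        · exact ⟨1, by omega, by unfold SS; simpa using h⟩
      obtain ⟨ε, hε1, hεm⟩ := hgfac
      rcases hy with hyH | hrep
      · -- y ∈ H: single letter
        right
        have hone : Alt G₀ G₁ H ε [y * g] := by
          rw [alt_singleton]
          exact ⟨mul_mem (H_le_SS ha ε hyH) hεm, fun hmem => hgH (by
            have := mul_mem (inv_mem hyH) hmem; simpa using this)⟩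
        interval_cases ε
        · exact Or.inl ⟨[y*g], hone, by simp, by simp⟩
        · exact Or.inr ⟨[y*g], hone, by simp, by simp⟩
      · -- y has a word
        have key : ∀ (j : ℕ) (w : List G), j ≤ 1 → Alt G₀ G₁ H j w → w ≠ [] → w.prod = y →
            P (y * g) := by
          intro j w hj hw hne hp
          rcases List.eq_nil_or_concat w with rfl | ⟨w', c, hconc⟩
          · exact absurd rfl hne
          rw [List.concat_eq_append] at hconc; subst hconc
          by_cases hpar : (j + w'.length + 1) % 2 = ε % 2
          · -- append
            right
            have halt : Alt G₀ G₁ H j ((w' ++ [c]) ++ [g]) := by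
              rw [alt_snoc]
              exact ⟨hw, by rwa [SS_parity (show (j + (w' ++ [c]).length) % 2 = ε % 2 by
                simp; omega)], hgH⟩
            have hprod : ((w' ++ [c]) ++ [g]).prod = y * g := by
              rw [← hp]; simp [List.prod_append, mul_assoc]
            interval_cases j
            · exact Or.inl ⟨_, halt, by simp, hprod⟩
            · exact Or.inr ⟨_, halt, by simp, hprod⟩
          · -- merge with last letter
            have hcg : c * g ∈ SS G₀ G₁ (j + w'.length) := by
              refine mul_mem (alt_snoc.1 hw).2.1 ?_
              rwa [SS_parity (show (j + w'.length) % 2 = ε % 2 by omega)]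
            by_cases hcgH : c * g ∈ H
            · -- letter dies
              rcases List.eq_nil_or_concat w' with rfl | ⟨w'', c', hconc2⟩
              · -- whole word dies into H
                left
                have : y * g = c * g := by rw [← hp]; simp
                rw [this]; exact hcgH
              · rw [List.concat_eq_append] at hconc2; subst hconc2
                right
                have hw'' : Alt G₀ G₁ H j (w'' ++ [c' * (c*g)]) := by
                  have hsplit := alt_snoc.1 (alt_snoc.1 hw).1
                  rw [alt_snoc]
                  refine ⟨hsplit.1, mul_mem hsplit.2.1 (H_le_SS ha _ hcgH),
                    fun hmem => hsplit.2.2 ?_⟩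
                  have : c' * (c*g) * (c*g)⁻¹ ∈ H := mul_mem hmem (inv_mem hcgH)
                  simpa [mul_assoc] using this
                have hprod : (w'' ++ [c' * (c*g)]).prod = y * g := by
                  rw [← hp]; simp [List.prod_append, mul_assoc]
                interval_cases j
                · exact Or.inl ⟨_, hw'', by simp, hprod⟩
                · exact Or.inr ⟨_, hw'', by simp, hprod⟩
            · -- replace last letter
              right
              have halt : Alt G₀ G₁ H j (w' ++ [c * g]) := by
                rw [alt_snoc]
                exact ⟨(alt_snoc.1 hw).1, hcg, hcgH⟩
              have hprod : (w' ++ [c * g]).prod = y * g := by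
                rw [← hp]; simp [List.prod_append, mul_assoc]
              interval_cases j
              · exact Or.inl ⟨_, halt, by simp, hprod⟩
              · exact Or.inr ⟨_, halt, by simp, hprod⟩
        rcases hrep with ⟨w, h1, h2, h3⟩ | ⟨w, h1, h2, h3⟩
        · exact key 0 w (by omega) h1 h2 h3
        · exact key 1 w (by omega) h1 h2 h3
  have hsymm : ∀ g ∈ (G₀ : Set G) ∪ (G₁ : Set G), g⁻¹ ∈ (G₀ : Set G) ∪ (G₁ : Set G) := by
    rintro g (h | h)
    · exact Or.inl (inv_mem h)
    · exact Or.inr (inv_mem h)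
  refine Subgroup.closure_induction_right (p := fun g _ => P g) ?_ ?_ ?_ hx
  · exact Or.inl (one_mem H)
  · intro y _ g hg hy; exact step y hy g hg
  · intro y _ g hg hy; exact step y hy g⁻¹ (hsymm g hg)


omit ha in
lemma SS_eq0 {m : ℕ} (h : m % 2 = 0) : SS G₀ G₁ m = G₀ := by
  rw [SS_parity (show m % 2 = 0 % 2 by omega)]; unfold SS; simp

omit ha in
lemma SS_eq1 {m : ℕ} (h : m % 2 = 1) : SS G₀ G₁ m = G₁ := by
  rw [SS_parity (show m % 2 = 1 % 2 by omega)]; unfold SS; simp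

end Amalgam

/-- reduced words of type `j` -/
def Rep (G₀ G₁ H : Subgroup G) (j : ℕ) (x : G) : Prop :=
  ∃ w, Alt G₀ G₁ H j w ∧ w ≠ [] ∧ w.prod = x

/-- odd reduced words starting and ending in `G₀ \ H` -/
def T00 (G₀ G₁ H : Subgroup G) (x : G) : Prop :=
  ∃ w, Alt G₀ G₁ H 0 w ∧ w ≠ [] ∧ w.prod = x ∧ w.length % 2 = 1

section Main

variable (ha : IsAmalgam G₀ G₁ H)
include ha

lemma rep_notH {j : ℕ} {x : G} (h : Rep G₀ G₁ H j x) : x ∉ H := by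
  obtain ⟨w, h1, h2, h3⟩ := h
  exact h3 ▸ notP ha h1 h2

lemma rep_disjoint {x : G} (h0 : Rep G₀ G₁ H 0 x) (h1 : Rep G₀ G₁ H 1 x) : False := by
  obtain ⟨w, hw1, hw2, hw3⟩ := h0
  obtain ⟨v, hv1, hv2, hv3⟩ := h1
  have := (cor_len ha hw1 hv1 hw2 hv2 (by rw [hw3, hv3])).2
  simp at this

omit ha in
lemma t00_rep0 {x : G} (h : T00 G₀ G₁ H x) : Rep G₀ G₁ H 0 x := by
  obtain ⟨w, h1, h2, h3, _⟩ := h; exact ⟨w, h1, h2, h3⟩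

/-- CORE1: a `T00` element maps `H ∪ Rep 1` to `Rep 0`. -/
lemma t00_mul {x y : G} (hx : T00 G₀ G₁ H x) (hy : y ∈ H ∨ Rep G₀ G₁ H 1 y) :
    Rep G₀ G₁ H 0 (x * y) := by
  obtain ⟨w, hw, hwne, hwp, hwodd⟩ := hx
  rcases hy with hyH | ⟨v, hv, hvne, hvp⟩
  · -- absorb into last letter
    rcases List.eq_nil_or_concat w with rfl | ⟨w', c, hconc⟩
    · exact absurd rfl hwne
    rw [List.concat_eq_append] at hconc; subst hconc
    refine ⟨w' ++ [c * y], ?_, by simp, ?_⟩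
    · rw [alt_snoc] at hw ⊢
      refine ⟨hw.1, mul_mem hw.2.1 (H_le_SS ha _ hyH), fun hmem => hw.2.2 ?_⟩
      have : c * y * y⁻¹ ∈ H := mul_mem hmem (inv_mem hyH)
      simpa using this
    · rw [← hwp]; simp [List.prod_append, mul_assoc]
  · -- append
    refine ⟨w ++ v, ?_, by simp [hwne], ?_⟩
    · exact alt_append hw (alt_parity (by omega) hv)
    · rw [List.prod_append, hwp, hvp]

omit ha in
/-- coset avoidance -/
lemma avoid (a₁ a₂ : G) (h1 : a₁ ∈ G₀) (h1' : a₁ ∉ H) (h2 : a₂ ∈ G₀) (h2' : a₂ ∉ H)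
    (h12 : a₁⁻¹ * a₂ ∉ H) (t : G) :
    ∃ x, x ∈ G₀ ∧ x ∉ H ∧ x * t ∉ H := by
  by_cases hA : a₁⁻¹ * t ∈ H
  · refine ⟨a₂⁻¹, inv_mem h2, fun hmem => h2' (by simpa using inv_mem hmem), fun hmem => ?_⟩
    have : (a₁⁻¹ * t) * (a₂⁻¹ * t)⁻¹ ∈ H := mul_mem hA (inv_mem hmem)
    have h3 : a₁⁻¹ * a₂ ∈ H := by
      have e : (a₁⁻¹ * t) * (a₂⁻¹ * t)⁻¹ = a₁⁻¹ * a₂ := by group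
      rwa [e] at this
    exact h12 h3
  · exact ⟨a₁⁻¹, inv_mem h1, fun hmem => h1' (by simpa using inv_mem hmem), hA⟩

omit ha in
/-- sandwich without cancellation -/
lemma sandwich {W M : List G} (hW : Alt G₀ G₁ H 0 W) (hWne : W ≠ [])
    (hM : Alt G₀ G₁ H W.length M) (hModd : M.length % 2 = 1) :
    T00 G₀ G₁ H (W.prod * M.prod * W.prod⁻¹) := by
  refine ⟨W ++ M ++ (W.map fun x => x⁻¹).reverse, ?_, by simp [hWne], ?_, ?_⟩
  · refine alt_append (alt_append hW (alt_parity (by omega) hM)) ?_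
    have := invRev_alt (H := H) hW
    refine alt_parity ?_ this
    simp; omega
  · simp [List.prod_append, invRev_prod, mul_assoc]
  · simp; omega


/-- side determination -/
lemma side1 {x : G} {m : ℕ} (hx : x ∈ SS G₀ G₁ m) (hH : x ∉ H) (h1 : x ∈ G₁) :
    m % 2 = 1 := by
  rcases Nat.mod_two_eq_zero_or_one m with h | h
  · exact absurd (mem_of_both ha x (by rwa [SS_eq0 h] at hx) h1) hH
  · exact h

lemma side0 {x : G} {m : ℕ} (hx : x ∈ SS G₀ G₁ m) (hH : x ∉ H) (h0 : x ∈ G₀) :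
    m % 2 = 0 := by
  rcases Nat.mod_two_eq_zero_or_one m with h | h
  · exact h
  · exact absurd (mem_of_both ha x h0 (by rwa [SS_eq1 h] at hx)) hH

omit ha in
/-- the standard `t`-wrap of a `T00` word -/
lemma wrap_t {a₁ b : G} (h1 : a₁ ∈ G₀) (h1' : a₁ ∉ H) (hbG : b ∈ G₁) (hb' : b ∉ H)
    {w : List G} (hw : Alt G₀ G₁ H 0 w) (hwne : w ≠ []) (hwodd : w.length % 2 = 1) :
    Alt G₀ G₁ H 0 ([a₁, b] ++ w ++ [b⁻¹, a₁⁻¹]) ∧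
      ([a₁, b] ++ w ++ [b⁻¹, a₁⁻¹]).prod = (a₁*b) * w.prod * (a₁*b)⁻¹ ∧
      ([a₁, b] ++ w ++ [b⁻¹, a₁⁻¹]).length % 2 = 1 := by
  refine ⟨?_, ?_, by simp; omega⟩
  · refine alt_append (alt_append ?_ (alt_parity (by simp) hw)) ?_
    · rw [show ([a₁, b] : List G) = [a₁] ++ [b] by simp]
      refine alt_append ?_ ?_
      · rw [alt_singleton, SS_eq0 (by simp)]; exact ⟨h1, h1'⟩
      · rw [alt_singleton, SS_eq1 (by simp)]; exact ⟨hbG, hb'⟩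
    · rw [show ([b⁻¹, a₁⁻¹] : List G) = [b⁻¹] ++ [a₁⁻¹] by simp]
      refine alt_append ?_ ?_
      · rw [alt_singleton, SS_eq1 (by simp; omega)]
        exact ⟨inv_mem hbG, fun hh => hb' (by simpa using inv_mem hh)⟩
      · rw [alt_singleton, SS_eq0 (by simp; omega)]
        exact ⟨inv_mem h1, fun hh => h1' (by simpa using inv_mem hh)⟩
  · simp [List.prod_append, mul_assoc, mul_inv_rev]

/-- the family preservation step -/
lemma family_step {a₁ b : G} (h1 : a₁ ∈ G₀) (h1' : a₁ ∉ H) (hbG : b ∈ G₁) (hb' : b ∉ H)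
    {W : List G} (hW : Alt G₀ G₁ H 0 W)
    (hgood : ∃ W' ℓ, W = W' ++ [ℓ] ∧ (ℓ ∈ G₁ ∨ ℓ * a₁ ∉ H))
    {y : G} (hy : T00 G₀ G₁ H y) :
    T00 G₀ G₁ H (W.prod * ((a₁*b) * y * (a₁*b)⁻¹) * W.prod⁻¹) := by
  obtain ⟨w, hw, hwne, hwp, hwodd⟩ := hy
  obtain ⟨hM, hMp, hModd⟩ := wrap_t (H := H) h1 h1' hbG hb' hw hwne hwodd
  obtain ⟨W', ℓ, rfl, hcase⟩ := hgood
  have hℓ : ℓ ∈ SS G₀ G₁ (0 + W'.length) ∧ ℓ ∉ H := (alt_snoc.1 hW).2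
  by_cases hℓG1 : ℓ ∈ G₁
  · -- no junction interaction
    have hpar : W'.length % 2 = 1 := by
      have := side1 ha hℓ.1 hℓ.2 hℓG1; simpa using this
    have h6 := sandwich (H := H) hW (by simp)
      (alt_parity (show (0:ℕ) % 2 = (W' ++ [ℓ]).length % 2 by simp; omega) hM)
      hModd
    rw [hMp, hwp] at h6
    exact h6
  · have hA : ℓ * a₁ ∉ H := hcase.resolve_left hℓG1
    have hℓG0 : ℓ ∈ G₀ := by
      rcases Nat.mod_two_eq_zero_or_one (0 + W'.length) with h | h
      · have h5 := hℓ.1; rwa [SS_eq0 h] at h5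
      · have h5 := hℓ.1; rw [SS_eq1 (G₀ := G₀) h] at h5; exact absurd h5 hℓG1
    have hpar : W'.length % 2 = 0 := by
      have := side0 ha hℓ.1 hℓ.2 hℓG0; simpa using this
    -- merged word
    set M2 : List G := [ℓ*a₁, b] ++ w ++ [b⁻¹, (ℓ*a₁)⁻¹] with hM2
    have hM2alt : Alt G₀ G₁ H W'.length M2 := by
      rw [hM2]
      refine alt_append (alt_append ?_ (alt_parity (by simp; omega) hw)) ?_
      · rw [show ([ℓ*a₁, b] : List G) = [ℓ*a₁] ++ [b] by simp]
        refine alt_append ?_ ?_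
        · rw [alt_singleton, SS_eq0 (by omega)]
          exact ⟨mul_mem hℓG0 h1, hA⟩
        · rw [alt_singleton, SS_eq1 (by simp; omega)]; exact ⟨hbG, hb'⟩
      · rw [show ([b⁻¹, (ℓ*a₁)⁻¹] : List G) = [b⁻¹] ++ [(ℓ*a₁)⁻¹] by simp]
        refine alt_append ?_ ?_
        · rw [alt_singleton, SS_eq1 (by simp; omega)]
          exact ⟨inv_mem hbG, fun hh => hb' (by simpa using inv_mem hh)⟩
        · rw [alt_singleton, SS_eq0 (by simp; omega)]
          exact ⟨inv_mem (mul_mem hℓG0 h1), fun hh => hA (by simpa using inv_mem hh)⟩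
    have hW' : Alt G₀ G₁ H 0 W' := (alt_snoc.1 hW).1
    rcases List.eq_nil_or_concat W' with rfl | ⟨_, _, hconc⟩
    · -- W = [ℓ] : the merged word itself is the witness
      refine ⟨M2, by simpa using hM2alt, by rw [hM2]; simp, ?_, by rw [hM2]; simp; omega⟩
      rw [hM2, ← hwp]
      simp only [List.prod_append, List.prod_cons, List.prod_nil]
      group
    · have hW'ne : W' ≠ [] := by rw [hconc]; simp
      have hs := sandwich (H := H) hW' hW'ne hM2alt
        (by rw [hM2]; simp; omega)
      have hprodeq : W'.prod * M2.prod * W'.prod⁻¹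
          = (W' ++ [ℓ]).prod * ((a₁*b) * y * (a₁*b)⁻¹) * ((W' ++ [ℓ]).prod)⁻¹ := by
        rw [hM2, ← hwp]
        simp only [List.prod_append, List.prod_cons, List.prod_nil]
        group
      rwa [hprodeq] at hs


omit ha in
lemma alt_two {x c : G} (hx : x ∈ G₀) (hx' : x ∉ H) (hc : c ∈ G₁) (hc' : c ∉ H) :
    Alt G₀ G₁ H 0 [x, c] := by
  rw [show ([x, c] : List G) = [x] ++ [c] by simp]
  refine alt_append ?_ ?_
  · rw [alt_singleton, SS_eq0 (by simp)]; exact ⟨hx, hx'⟩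
  · rw [alt_singleton, SS_eq1 (by simp)]; exact ⟨hc, hc'⟩

omit ha in
lemma alt_three {x c x₂ : G} (hx : x ∈ G₀) (hx' : x ∉ H) (hc : c ∈ G₁) (hc' : c ∉ H)
    (hy : x₂ ∈ G₀) (hy' : x₂ ∉ H) : Alt G₀ G₁ H 0 [x, c, x₂] := by
  rw [show ([x, c, x₂] : List G) = [x, c] ++ [x₂] by simp]
  refine alt_append (alt_two hx hx' hc hc') ?_
  rw [alt_singleton, SS_eq0 (by simp)]; exact ⟨hy, hy'⟩

/-- the exit chain: conjugating an element of `H` along a word that moves it out of `H`,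
there is a suffix giving a clean one-letter exit. -/
lemma chain {Z : G} (hZ : Z ∈ H) :
    ∀ (V' : List G) (e : G) (k : ℕ), Alt G₀ G₁ H k (V' ++ [e]) →
      (V' ++ [e]).prod * Z * ((V' ++ [e]).prod)⁻¹ ∉ H →
    ∃ (ρ' : List G) (kρ : ℕ), Alt G₀ G₁ H kρ (ρ' ++ [e]) ∧
      (ρ' ++ [e]).prod * Z * ((ρ' ++ [e]).prod)⁻¹ ∈ SS G₀ G₁ kρ ∧
      (ρ' ++ [e]).prod * Z * ((ρ' ++ [e]).prod)⁻¹ ∉ H := by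
  intro V'
  induction V' with
  | nil =>
    intro e k halt hcon
    refine ⟨[], k, halt, ?_, hcon⟩
    have he : e ∈ SS G₀ G₁ k ∧ e ∉ H := by simpa using (alt_snoc.1 halt).2
    simp only [List.nil_append, List.prod_cons, List.prod_nil, mul_one]
    exact mul_mem (mul_mem he.1 (H_le_SS ha k hZ)) (inv_mem he.1)
  | cons ℓ V'' ih =>
    intro e k halt hcon
    by_cases hζ : (V'' ++ [e]).prod * Z * ((V'' ++ [e]).prod)⁻¹ ∈ H
    · refine ⟨ℓ :: V'', k, halt, ?_, hcon⟩
      have hℓm : ℓ ∈ SS G₀ G₁ k ∧ ℓ ∉ H := (alt_cons.1 (show Alt G₀ G₁ H k (ℓ :: (V'' ++ [e])) from halt)).1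
      have heq : ((ℓ :: V'') ++ [e]).prod * Z * (((ℓ :: V'') ++ [e]).prod)⁻¹
          = ℓ * ((V'' ++ [e]).prod * Z * ((V'' ++ [e]).prod)⁻¹) * ℓ⁻¹ := by
        simp only [List.cons_append, List.prod_cons]
        group
      rw [heq]
      exact mul_mem (mul_mem hℓm.1 (H_le_SS ha k hζ)) (inv_mem hℓm.1)
    · obtain ⟨ρ', kρ, p1, p2, p3⟩ :=
        ih e (k+1) (alt_cons.1 (show Alt G₀ G₁ H k (ℓ :: (V'' ++ [e])) from halt)).2 hζ
      exact ⟨ρ', kρ, p1, p2, p3⟩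

lemma wpool_aux {a₁ b Z : G} (hbG : b ∈ G₁) (hb' : b ∉ H) (h1 : a₁ ∈ G₀) (h1' : a₁ ∉ H)
    {g : G} (hg1 : g * (b * Z * b⁻¹) * g⁻¹ ∉ H)
    (hg2 : g * ((a₁*b) * Z * (a₁*b)⁻¹) * g⁻¹ ∉ H)
    (U : List G) (hUne : U ≠ []) (hUp : U.prod = g) (j : ℕ) (hU : Alt G₀ G₁ H j U) :
    ∃ (V' : List G) (e : G) (k : ℕ), Alt G₀ G₁ H k (V' ++ [e]) ∧ e ∈ G₁ ∧
      (V' ++ [e]).prod * Z * ((V' ++ [e]).prod)⁻¹ ∉ H := by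
  rcases Nat.mod_two_eq_zero_or_one (j + U.length) with hpar | hpar
  · -- last letter of U sits in G₁ position; append a₁ then b
    refine ⟨U ++ [a₁], b, j, ?_, hbG, ?_⟩
    · rw [alt_snoc]
      refine ⟨?_, ?_, hb'⟩
      · rw [alt_snoc]
        refine ⟨hU, ?_, h1'⟩
        rw [SS_eq0 hpar]; exact h1
      · rw [SS_eq1 (by simp; omega)]; exact hbG
    · intro hmem; apply hg2
      have heq : g * ((a₁*b) * Z * (a₁*b)⁻¹) * g⁻¹
          = ((U ++ [a₁]) ++ [b]).prod * Z * (((U ++ [a₁]) ++ [b]).prod)⁻¹ := by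
        simp only [List.prod_append, List.prod_cons, List.prod_nil, hUp]
        group
      rwa [heq]
  · -- append b directly
    refine ⟨U, b, j, ?_, hbG, ?_⟩
    · rw [alt_snoc]
      refine ⟨hU, ?_, hb'⟩
      rw [SS_eq1 hpar]; exact hbG
    · intro hmem; apply hg1
      have heq : g * (b * Z * b⁻¹) * g⁻¹
          = (U ++ [b]).prod * Z * ((U ++ [b]).prod)⁻¹ := by
        simp only [List.prod_append, List.prod_cons, List.prod_nil, hUp]
        group
      rwa [heq]

/-- witness with a `G₁` last letter, via `hconj` on a two-element pool -/
lemma wpool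
    (hc : ∀ F : Finset G, (1 : G) ∉ F →
      ∃ g : G, ((fun x => g * x * g⁻¹) '' (F : Set G)) ∩ (H : Set G) = ∅)
    {a₁ b : G} (h1 : a₁ ∈ G₀) (h1' : a₁ ∉ H) (hbG : b ∈ G₁) (hb' : b ∉ H)
    {Z : G} (hZH : Z ∈ H) (hZ1 : Z ≠ 1) :
    ∃ (V' : List G) (e : G) (k : ℕ), Alt G₀ G₁ H k (V' ++ [e]) ∧ e ∈ G₁ ∧
      (V' ++ [e]).prod * Z * ((V' ++ [e]).prod)⁻¹ ∉ H := by
  classical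
  set y₁ := b * Z * b⁻¹ with hy₁
  set y₂ := (a₁ * b) * Z * (a₁ * b)⁻¹ with hy₂
  have hy₁1 : y₁ ≠ 1 := by
    intro hcon; apply hZ1
    have : Z = b⁻¹ * 1 * b := by rw [← hcon, hy₁]; group
    simpa using this
  have hy₂1 : y₂ ≠ 1 := by
    intro hcon; apply hZ1
    have h7 : Z = (a₁*b)⁻¹ * 1 * (a₁*b) := by rw [← hcon, hy₂]; group
    rw [h7]; group
  obtain ⟨g, hg⟩ := hc {y₁, y₂} (by
    simp only [Finset.mem_insert, Finset.mem_singleton]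
    push_neg
    exact ⟨fun hcon => hy₁1 hcon.symm, fun hcon => hy₂1 hcon.symm⟩)
  have hg1 : g * y₁ * g⁻¹ ∉ H := by
    intro hmem
    have : g * y₁ * g⁻¹ ∈ ((fun x => g * x * g⁻¹) '' ({y₁, y₂} : Finset G)) ∩ (H : Set G) :=
      ⟨⟨y₁, by simp, rfl⟩, hmem⟩
    rw [hg] at this; exact this
  have hg2 : g * y₂ * g⁻¹ ∉ H := by
    intro hmem
    have : g * y₂ * g⁻¹ ∈ ((fun x => g * x * g⁻¹) '' ({y₁, y₂} : Finset G)) ∩ (H : Set G) :=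
      ⟨⟨y₂, by simp, rfl⟩, hmem⟩
    rw [hg] at this; exact this
  rcases tot ha g with hgH | ⟨U, hU, hUne, hUp⟩ | ⟨U, hU, hUne, hUp⟩
  · -- g ∈ H : single letter g * b
    refine ⟨[], g * b, 1, ?_, mul_mem (ha.le_right hgH) hbG, ?_⟩
    · simp only [List.nil_append]
      rw [alt_singleton, SS_eq1 (by simp)]
      refine ⟨mul_mem (ha.le_right hgH) hbG, fun hmem => hb' ?_⟩
      have := mul_mem (inv_mem hgH) hmem; simpa using this
    · simp only [List.nil_append, List.prod_cons, List.prod_nil, mul_one]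
      intro hmem; apply hg1
      have heq : g * y₁ * g⁻¹ = (g * b) * Z * (g * b)⁻¹ := by rw [hy₁]; group
      rwa [heq]
  · exact wpool_aux ha hbG hb' h1 h1' hg1 hg2 U hUne hUp 0 hU
  · exact wpool_aux ha hbG hb' h1 h1' hg1 hg2 U hUne hUp 1 hU


set_option maxHeartbeats 1000000 in
/-- per-element conjugation into `T00` with a good inner end -/
lemma pcon
    (hc : ∀ F : Finset G, (1 : G) ∉ F →
      ∃ g : G, ((fun x => g * x * g⁻¹) '' (F : Set G)) ∩ (H : Set G) = ∅)
    {a₁ a₂ b : G} (h1 : a₁ ∈ G₀) (h1' : a₁ ∉ H) (h2 : a₂ ∈ G₀) (h2' : a₂ ∉ H)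
    (h12 : a₁⁻¹ * a₂ ∉ H) (hbG : b ∈ G₁) (hb' : b ∉ H)
    {Z : G} (hZ1 : Z ≠ 1) :
    ∃ W : List G, Alt G₀ G₁ H 0 W ∧ W ≠ [] ∧
      (∃ W' ℓ, W = W' ++ [ℓ] ∧ (ℓ ∈ G₁ ∨ ℓ * a₁ ∉ H)) ∧
      T00 G₀ G₁ H (W.prod * Z * W.prod⁻¹) := by
  rcases tot ha Z with hZH | ⟨v, hv, hvne, hvp⟩ | ⟨v, hv, hvne, hvp⟩
  · -- ===== Z ∈ H =====
    obtain ⟨V', e, k, halt, heG1, hcon⟩ := wpool ha hc h1 h1' hbG hb' hZH hZ1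
    obtain ⟨ρ', kρ, hρ, hzSS, hzH⟩ := chain ha hZH V' e k halt hcon
    set zs := (ρ' ++ [e]).prod * Z * ((ρ' ++ [e]).prod)⁻¹ with hzs
    rcases Nat.mod_two_eq_zero_or_one kρ with hk | hk
    · refine ⟨[a₁, b] ++ (ρ' ++ [e]), ?_, by simp, ⟨[a₁, b] ++ ρ', e, by simp, Or.inl heG1⟩, ?_⟩
      · exact alt_append (alt_two h1 h1' hbG hb') (alt_parity (by simp; omega) hρ)
      · have hs := sandwich (H := H) (W := [a₁, b]) (M := [zs]) (alt_two h1 h1' hbG hb')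
          (by simp)
          (by rw [alt_singleton, SS_parity (show ([a₁, b] : List G).length % 2 = kρ % 2 by
                simp; omega)]
              exact ⟨hzSS, hzH⟩)
          (by simp)
        have hkey : ([a₁, b] ++ (ρ' ++ [e])).prod * Z * (([a₁, b] ++ (ρ' ++ [e])).prod)⁻¹
            = ([a₁, b] : List G).prod * ([zs] : List G).prod * (([a₁, b] : List G).prod)⁻¹ := by
          rw [hzs]
          simp only [List.prod_append, List.prod_cons, List.prod_nil, mul_one]
          group
        rw [hkey]; exact hs
    · refine ⟨[a₁, b, a₁] ++ (ρ' ++ [e]), ?_, by simp,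
        ⟨[a₁, b, a₁] ++ ρ', e, by simp, Or.inl heG1⟩, ?_⟩
      · exact alt_append (alt_three h1 h1' hbG hb' h1 h1') (alt_parity (by simp; omega) hρ)
      · have hs := sandwich (H := H) (W := [a₁, b, a₁]) (M := [zs])
          (alt_three h1 h1' hbG hb' h1 h1') (by simp)
          (by rw [alt_singleton, SS_parity (show ([a₁, b, a₁] : List G).length % 2 = kρ % 2 by
                simp; omega)]
              exact ⟨hzSS, hzH⟩)
          (by simp)
        have hkey : ([a₁, b, a₁] ++ (ρ' ++ [e])).prod * Z * (([a₁, b, a₁] ++ (ρ' ++ [e])).prod)⁻¹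
            = ([a₁, b, a₁] : List G).prod * ([zs] : List G).prod
              * (([a₁, b, a₁] : List G).prod)⁻¹ := by
          rw [hzs]
          simp only [List.prod_append, List.prod_cons, List.prod_nil, mul_one]
          group
        rw [hkey]; exact hs
  · -- ===== Z ∉ H, type (0, ·) =====
    rcases List.eq_nil_or_concat v with rfl | ⟨v', e, hconc⟩
    · exact absurd rfl hvne
    rw [List.concat_eq_append] at hconc; subst hconc
    have hv' : Alt G₀ G₁ H 0 v' := (alt_snoc.1 hv).1
    have hepos : e ∈ SS G₀ G₁ (0 + v'.length) ∧ e ∉ H := (alt_snoc.1 hv).2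
    rcases Nat.mod_two_eq_zero_or_one v'.length with hpar | hpar
    · -- type (0,0) : sandwich with [a₁, b]
      refine ⟨[a₁, b], alt_two h1 h1' hbG hb', by simp, ⟨[a₁], b, by simp, Or.inl hbG⟩, ?_⟩
      have hs := sandwich (H := H) (W := [a₁, b]) (M := v' ++ [e]) (alt_two h1 h1' hbG hb')
        (by simp) (alt_parity (by simp) hv) (by simp; omega)
      rwa [hvp] at hs
    · -- type (0,1)
      have heG1 : e ∈ G₁ := by
        have h5 := hepos.1; rwa [SS_eq1 (by omega)] at h5
      by_cases hA : ∃ c, c ∈ G₁ ∧ c ∉ H ∧ e * c⁻¹ ∉ H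
      · obtain ⟨c, hcG, hcH, hec⟩ := hA
        refine ⟨[a₁, c], alt_two h1 h1' hcG hcH, by simp, ⟨[a₁], c, by simp, Or.inl hcG⟩,
          [a₁, c] ++ v' ++ [e * c⁻¹, a₁⁻¹], ?_, by simp, ?_, by simp; omega⟩
        · refine alt_append (alt_append (alt_two h1 h1' hcG hcH)
            (alt_parity (by simp) hv')) ?_
          rw [show ([e * c⁻¹, a₁⁻¹] : List G) = [e * c⁻¹] ++ [a₁⁻¹] by simp]
          refine alt_append ?_ ?_
          · rw [alt_singleton, SS_eq1 (by simp; omega)]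
            exact ⟨mul_mem heG1 (inv_mem hcG), hec⟩
          · rw [alt_singleton, SS_eq0 (by simp; omega)]
            exact ⟨inv_mem h1, fun hh => h1' (by simpa using inv_mem hh)⟩
        · rw [← hvp]
          simp only [List.prod_append, List.prod_cons, List.prod_nil, mul_one]
          group
      · push_neg at hA
        have hm : e * b⁻¹ ∈ H := hA b hbG hb'
        rcases List.eq_nil_or_concat v' with rfl | ⟨v'', f, hconc2⟩
        · simp at hpar
        rw [List.concat_eq_append] at hconc2; subst hconc2
        have hv'' : Alt G₀ G₁ H 0 v'' := (alt_snoc.1 hv').1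
        have hfpos : f ∈ SS G₀ G₁ (0 + v''.length) ∧ f ∉ H := (alt_snoc.1 hv').2
        have hfG0 : f ∈ G₀ := by
          have h5 := hfpos.1; rwa [SS_eq0 (by simp at hpar ⊢; omega)] at h5
        obtain ⟨xh, hxh0, hxhH, hxhA⟩ :=
          avoid (H := H) a₁ a₂ h1 h1' h2 h2' h12 ((e * b⁻¹)⁻¹ * f⁻¹)
        set m₂ := f * (e * b⁻¹) * xh⁻¹ with hm₂
        have hm₂H : m₂ ∉ H := by
          intro hmem
          apply hxhA
          have : m₂⁻¹ ∈ H := inv_mem hmem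
          have heq : m₂⁻¹ = xh * ((e * b⁻¹)⁻¹ * f⁻¹) := by rw [hm₂]; group
          rwa [heq] at this
        have hm₂G : m₂ ∈ G₀ := mul_mem (mul_mem hfG0 (ha.le_left hm)) (inv_mem hxh0)
        refine ⟨[xh, b], alt_two hxh0 hxhH hbG hb', by simp,
          ⟨[xh], b, by simp, Or.inl hbG⟩,
          [xh, b] ++ v'' ++ [m₂], ?_, by simp, ?_, by simp at hpar ⊢; omega⟩
        · refine alt_append (alt_append (alt_two hxh0 hxhH hbG hb')
            (alt_parity (by simp) hv'')) ?_
          rw [alt_singleton, SS_eq0 (by simp at hpar ⊢; omega)]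
          exact ⟨hm₂G, hm₂H⟩
        · rw [← hvp, hm₂]
          simp only [List.prod_append, List.prod_cons, List.prod_nil, mul_one]
          group
  · -- ===== Z ∉ H, type (1, ·) =====
    rcases List.eq_nil_or_concat v with rfl | ⟨v', e, hconc⟩
    · exact absurd rfl hvne
    rw [List.concat_eq_append] at hconc; subst hconc
    have hv' : Alt G₀ G₁ H 1 v' := (alt_snoc.1 hv).1
    have hepos : e ∈ SS G₀ G₁ (1 + v'.length) ∧ e ∉ H := (alt_snoc.1 hv).2
    rcases Nat.mod_two_eq_zero_or_one v'.length with hpar | hpar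
    · -- type (1,1) : sandwich with [a₁, b, x*]
      obtain ⟨xs, hxs0, hxsH, hxsA⟩ := avoid (H := H) a₁ a₂ h1 h1' h2 h2' h12 a₁
      refine ⟨[a₁, b, xs], alt_three h1 h1' hbG hb' hxs0 hxsH, by simp,
        ⟨[a₁, b], xs, by simp, Or.inr hxsA⟩, ?_⟩
      have hs := sandwich (H := H) (W := [a₁, b, xs]) (M := v' ++ [e])
        (alt_three h1 h1' hbG hb' hxs0 hxsH) (by simp)
        (alt_parity (by simp) hv) (by simp; omega)
      rwa [hvp] at hs
    · -- type (1,0)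
      have heG0 : e ∈ G₀ := by
        have h5 := hepos.1; rwa [SS_eq0 (by omega)] at h5
      obtain ⟨xt, hxt0, hxtH, hxtA⟩ := avoid (H := H) a₁ a₂ h1 h1' h2 h2' h12 a₁
      by_cases hA : e * xt⁻¹ ∈ H
      · -- merge cascade
        rcases List.eq_nil_or_concat v' with rfl | ⟨v'', f, hconc2⟩
        · simp at hpar
        rw [List.concat_eq_append] at hconc2; subst hconc2
        have hv'' : Alt G₀ G₁ H 1 v'' := (alt_snoc.1 hv').1
        have hfpos : f ∈ SS G₀ G₁ (1 + v''.length) ∧ f ∉ H := (alt_snoc.1 hv').2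
        have hfG1 : f ∈ G₁ := by
          have h5 := hfpos.1; rwa [SS_eq1 (by simp at hpar ⊢; omega)] at h5
        by_cases hB : ∃ c, c ∈ G₁ ∧ c ∉ H ∧ f * (e * xt⁻¹) * c⁻¹ ∉ H
        · obtain ⟨c, hcG, hcH, hfc⟩ := hB
          refine ⟨[a₁, c, xt], alt_three h1 h1' hcG hcH hxt0 hxtH, by simp,
            ⟨[a₁, c], xt, by simp, Or.inr hxtA⟩,
            [a₁, c, xt] ++ v'' ++ [f * (e * xt⁻¹) * c⁻¹, a₁⁻¹], ?_, by simp, ?_,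
            by simp at hpar ⊢; omega⟩
          · refine alt_append (alt_append (alt_three h1 h1' hcG hcH hxt0 hxtH)
              (alt_parity (by simp) hv'')) ?_
            rw [show ([f * (e * xt⁻¹) * c⁻¹, a₁⁻¹] : List G) = [f * (e * xt⁻¹) * c⁻¹] ++ [a₁⁻¹]
              by simp]
            refine alt_append ?_ ?_
            · rw [alt_singleton, SS_eq1 (by simp at hpar ⊢; omega)]
              exact ⟨mul_mem (mul_mem hfG1 (ha.le_right hA)) (inv_mem hcG), hfc⟩
            · rw [alt_singleton, SS_eq0 (by simp at hpar ⊢; omega)]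
              exact ⟨inv_mem h1, fun hh => h1' (by simpa using inv_mem hh)⟩
          · rw [← hvp]
            simp only [List.prod_append, List.prod_cons, List.prod_nil, mul_one]
            group
        · push_neg at hB
          have hm₂ : f * (e * xt⁻¹) * b⁻¹ ∈ H := hB b hbG hb'
          rcases List.eq_nil_or_concat v'' with rfl | ⟨v3, g₂, hconc3⟩
          · -- v = [f, e]
            obtain ⟨xh, hxh0, hxhH, hxhA⟩ :=
              avoid (H := H) a₁ a₂ h1 h1' h2 h2' h12 ((f * (e * xt⁻¹) * b⁻¹)⁻¹ * xt⁻¹)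
            set m₃ := xt * (f * (e * xt⁻¹) * b⁻¹) * xh⁻¹ with hm₃
            have hm₃H : m₃ ∉ H := by
              intro hmem
              apply hxhA
              have : m₃⁻¹ ∈ H := inv_mem hmem
              have heq : m₃⁻¹ = xh * ((f * (e * xt⁻¹) * b⁻¹)⁻¹ * xt⁻¹) := by rw [hm₃]; group
              rwa [heq] at this
            have hm₃G : m₃ ∈ G₀ := mul_mem (mul_mem hxt0 (ha.le_left hm₂)) (inv_mem hxh0)
            refine ⟨[xh, b, xt], alt_three hxh0 hxhH hbG hb' hxt0 hxtH, by simp,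
              ⟨[xh, b], xt, by simp, Or.inr hxtA⟩,
              [xh, b, m₃], ?_, by simp, ?_, by simp⟩
            · exact alt_three hxh0 hxhH hbG hb' hm₃G hm₃H
            · rw [← hvp, hm₃]
              simp only [List.prod_append, List.prod_cons, List.prod_nil, mul_one]
              group
          · rw [List.concat_eq_append] at hconc3; subst hconc3
            have hv3 : Alt G₀ G₁ H 1 v3 := (alt_snoc.1 hv'').1
            have hg₂pos : g₂ ∈ SS G₀ G₁ (1 + v3.length) ∧ g₂ ∉ H := (alt_snoc.1 hv'').2
            have hg₂G0 : g₂ ∈ G₀ := by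
              have h5 := hg₂pos.1
              rwa [SS_eq0 (by simp at hpar ⊢; omega)] at h5
            obtain ⟨xh, hxh0, hxhH, hxhA⟩ :=
              avoid (H := H) a₁ a₂ h1 h1' h2 h2' h12 ((f * (e * xt⁻¹) * b⁻¹)⁻¹ * g₂⁻¹)
            set m₃ := g₂ * (f * (e * xt⁻¹) * b⁻¹) * xh⁻¹ with hm₃
            have hm₃H : m₃ ∉ H := by
              intro hmem
              apply hxhA
              have : m₃⁻¹ ∈ H := inv_mem hmem
              have heq : m₃⁻¹ = xh * ((f * (e * xt⁻¹) * b⁻¹)⁻¹ * g₂⁻¹) := by rw [hm₃]; group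
              rwa [heq] at this
            have hm₃G : m₃ ∈ G₀ := mul_mem (mul_mem hg₂G0 (ha.le_left hm₂)) (inv_mem hxh0)
            refine ⟨[xh, b, xt], alt_three hxh0 hxhH hbG hb' hxt0 hxtH, by simp,
              ⟨[xh, b], xt, by simp, Or.inr hxtA⟩,
              [xh, b, xt] ++ v3 ++ [m₃], ?_, by simp, ?_, by simp at hpar ⊢; omega⟩
            · refine alt_append (alt_append (alt_three hxh0 hxhH hbG hb' hxt0 hxtH)
                (alt_parity (by simp) hv3)) ?_
              rw [alt_singleton, SS_eq0 (by simp at hpar ⊢; omega)]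
              exact ⟨hm₃G, hm₃H⟩
            · rw [← hvp, hm₃]
              simp only [List.prod_append, List.prod_cons, List.prod_nil, mul_one]
              group
      · -- no merge
        refine ⟨[a₁, b, xt], alt_three h1 h1' hbG hb' hxt0 hxtH, by simp,
          ⟨[a₁, b], xt, by simp, Or.inr hxtA⟩,
          [a₁, b, xt] ++ v' ++ [e * xt⁻¹, b⁻¹, a₁⁻¹], ?_, by simp, ?_, by simp; omega⟩
        · refine alt_append (alt_append (alt_three h1 h1' hbG hb' hxt0 hxtH)
            (alt_parity (by simp) hv')) ?_
          rw [show ([e * xt⁻¹, b⁻¹, a₁⁻¹] : List G) = [e * xt⁻¹] ++ ([b⁻¹] ++ [a₁⁻¹]) by simp]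
          refine alt_append ?_ (alt_append ?_ ?_)
          · rw [alt_singleton, SS_eq0 (by simp; omega)]
            exact ⟨mul_mem heG0 (inv_mem hxt0), hA⟩
          · rw [alt_singleton, SS_eq1 (by simp; omega)]
            exact ⟨inv_mem hbG, fun hh => hb' (by simpa using inv_mem hh)⟩
          · rw [alt_singleton, SS_eq0 (by simp; omega)]
            exact ⟨inv_mem h1, fun hh => h1' (by simpa using inv_mem hh)⟩
        · rw [← hvp]
          simp only [List.prod_append, List.prod_cons, List.prod_nil, mul_one]
          group


/-- one step of the uniformization -/
lemma step
    (hc : ∀ F : Finset G, (1 : G) ∉ F →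
      ∃ g : G, ((fun x => g * x * g⁻¹) '' (F : Set G)) ∩ (H : Set G) = ∅)
    {a₁ a₂ b : G} (h1 : a₁ ∈ G₀) (h1' : a₁ ∉ H) (h2 : a₂ ∈ G₀) (h2' : a₂ ∉ H)
    (h12 : a₁⁻¹ * a₂ ∉ H) (hbG : b ∈ G₁) (hb' : b ∉ H)
    (s y₀ : G) (hy₀ : y₀ ≠ 1) :
    ∃ s₁ : G, T00 G₀ G₁ H (s₁ * y₀ * s₁⁻¹) ∧
      ∀ y : G, T00 G₀ G₁ H (s * y * s⁻¹) → T00 G₀ G₁ H (s₁ * y * s₁⁻¹) := by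
  set Z := (a₁ * b) * (s * y₀ * s⁻¹) * (a₁ * b)⁻¹ with hZdef
  have hZ1 : Z ≠ 1 := by
    rw [hZdef]
    intro hcon
    apply hy₀
    have h7 : y₀ = (s⁻¹ * (a₁*b)⁻¹) * ((a₁ * b) * (s * y₀ * s⁻¹) * (a₁ * b)⁻¹) * ((a₁*b) * s) := by
      group
    rw [hcon, mul_one] at h7
    rw [h7]; group
  obtain ⟨W, hW, hWne, hgood, hT⟩ := pcon ha hc h1 h1' h2 h2' h12 hbG hb' hZ1
  refine ⟨W.prod * ((a₁ * b) * s), ?_, ?_⟩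
  · have heq : (W.prod * ((a₁*b) * s)) * y₀ * (W.prod * ((a₁*b)*s))⁻¹
        = W.prod * Z * W.prod⁻¹ := by
      rw [hZdef]; group
    rw [heq]; exact hT
  · intro y hy
    have hf := family_step ha h1 h1' hbG hb' hW hgood hy
    have heq : (W.prod * ((a₁*b) * s)) * y * (W.prod * ((a₁*b)*s))⁻¹
        = W.prod * ((a₁*b) * (s * y * s⁻¹) * (a₁*b)⁻¹) * W.prod⁻¹ := by group
    rw [heq]; exact hf

/-- uniformization over a finite set -/
lemma unif
    (hc : ∀ F : Finset G, (1 : G) ∉ F →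
      ∃ g : G, ((fun x => g * x * g⁻¹) '' (F : Set G)) ∩ (H : Set G) = ∅)
    {a₁ a₂ b : G} (h1 : a₁ ∈ G₀) (h1' : a₁ ∉ H) (h2 : a₂ ∈ G₀) (h2' : a₂ ∉ H)
    (h12 : a₁⁻¹ * a₂ ∉ H) (hbG : b ∈ G₁) (hb' : b ∉ H)
    (Y : Finset G) (h1Y : (1:G) ∉ Y) : ∃ s : G, ∀ y ∈ Y, T00 G₀ G₁ H (s * y * s⁻¹) := by
  classical
  induction Y using Finset.induction_on with
  | empty => exact ⟨1, by simp⟩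
  | @insert y₀ Y hy₀Y ih =>
    obtain ⟨s, hs⟩ := ih (fun hmem => h1Y (Finset.mem_insert_of_mem hmem))
    have hy₀1 : y₀ ≠ 1 := fun hcon => h1Y (by rw [← hcon]; exact Finset.mem_insert_self _ _)
    obtain ⟨s₁, hnew, hold⟩ := step ha hc h1 h1' h2 h2' h12 hbG hb' s y₀ hy₀1
    refine ⟨s₁, fun y hy => ?_⟩
    rcases Finset.mem_insert.1 hy with rfl | hy
    · exact hnew
    · exact hold y (hs y hy)


end Main

/-- marker pattern -/
def patt (a₁ b : G) : ℕ → List G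
  | 0 => []
  | (i+1) => a₁ :: b :: patt a₁ b i

section Markers

variable (ha : IsAmalgam G₀ G₁ H)
variable {a₁ a₂ b : G} (h1 : a₁ ∈ G₀) (h1' : a₁ ∉ H) (h2 : a₂ ∈ G₀) (h2' : a₂ ∉ H)
  (h12 : a₁⁻¹ * a₂ ∉ H) (hbG : b ∈ G₁) (hb' : b ∉ H)

omit ha in
lemma patt_length (i : ℕ) : (patt a₁ b i).length = 2 * i := by
  induction i with
  | zero => rfl
  | succ n ih => simp [patt, ih]; omega

omit ha in
lemma patt_prod (i : ℕ) : (patt a₁ b i).prod = (a₁ * b)^i := by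
  induction i with
  | zero => simp [patt]
  | succ n ih =>
    rw [patt]
    simp only [List.prod_cons, ih]
    rw [← mul_assoc, ← pow_succ']

omit ha in
lemma patt_add (m n : ℕ) : patt a₁ b (m + n) = patt a₁ b m ++ patt a₁ b n := by
  induction m with
  | zero => simp [patt]
  | succ p ih => rw [show p + 1 + n = (p + n) + 1 by omega, patt, ih, patt]; simp

omit ha in
include h1 h1' hbG hb' in
lemma patt_alt (i : ℕ) : Alt G₀ G₁ H 0 (patt a₁ b i) := by
  induction i with
  | zero => simp [patt]
  | succ n ih =>
    rw [patt, show (a₁ :: b :: patt a₁ b n) = [a₁, b] ++ patt a₁ b n by simp]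
    exact alt_append (alt_two h1 h1' hbG hb') (alt_parity (by simp) ih)

include ha h1 h1' h2 h2' h12 hbG hb' in
/-- marker disjointness -/
lemma marker {i j : ℕ} (hij : i < j) {x y : G}
    (hx : Rep G₀ G₁ H 0 x) (hy : Rep G₀ G₁ H 0 y) :
    ((a₁*b)^i * (a₂*b)) * x ≠ ((a₁*b)^j * (a₂*b)) * y := by
  intro hcon
  obtain ⟨wx, hwx, hwxne, hwxp⟩ := hx
  obtain ⟨wy, hwy, hwyne, hwyp⟩ := hy
  set W : List G := (patt a₁ b i ++ [a₂, b]) ++ wx with hW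
  set V : List G := (patt a₁ b j ++ [a₂, b]) ++ wy with hV
  have hWalt : Alt G₀ G₁ H 0 W := by
    rw [hW]
    refine alt_append (alt_append (patt_alt h1 h1' hbG hb' i) ?_)
      (alt_parity (by simp [patt_length] <;> omega) hwx)
    rw [show ([a₂, b] : List G) = [a₂] ++ [b] by simp]
    refine alt_append ?_ ?_
    · rw [alt_singleton, SS_eq0 (by simp [patt_length] <;> omega)]; exact ⟨h2, h2'⟩
    · rw [alt_singleton, SS_eq1 (by simp [patt_length] <;> omega)]; exact ⟨hbG, hb'⟩
  have hValt : Alt G₀ G₁ H 0 V := by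
    rw [hV]
    refine alt_append (alt_append (patt_alt h1 h1' hbG hb' j) ?_)
      (alt_parity (by simp [patt_length] <;> omega) hwy)
    rw [show ([a₂, b] : List G) = [a₂] ++ [b] by simp]
    refine alt_append ?_ ?_
    · rw [alt_singleton, SS_eq0 (by simp [patt_length] <;> omega)]; exact ⟨h2, h2'⟩
    · rw [alt_singleton, SS_eq1 (by simp [patt_length] <;> omega)]; exact ⟨hbG, hb'⟩
  have hWp : W.prod = ((a₁*b)^i * (a₂*b)) * x := by
    rw [hW]
    simp [List.prod_append, patt_prod, hwxp, mul_assoc]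
  have hVp : V.prod = ((a₁*b)^j * (a₂*b)) * y := by
    rw [hV]
    simp [List.prod_append, patt_prod, hwyp, mul_assoc]
  have hprods : W.prod = V.prod := by rw [hWp, hVp, hcon]
  have hco := cor3 ha hWalt hValt hprods (2*i+1) (by
    rw [hW]; simp [patt_length] <;> omega)
  -- compute the two prefixes
  have htW : W.take (2*i+1) = patt a₁ b i ++ [a₂] := by
    rw [hW, show (patt a₁ b i ++ [a₂, b]) ++ wx = (patt a₁ b i ++ [a₂]) ++ ([b] ++ wx) by simp]
    exact List.take_left' (by simp [patt_length])
  have htV : V.take (2*i+1) = patt a₁ b i ++ [a₁] := by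
    have hsplit0 : ∀ kk, patt a₁ b (i + (kk+1)) = patt a₁ b i ++ (a₁ :: b :: patt a₁ b kk) :=
      fun kk => by rw [patt_add]; rfl
    have hsplit : patt a₁ b j = patt a₁ b i ++ (a₁ :: b :: patt a₁ b (j - i - 1)) := by
      rw [← hsplit0 (j - i - 1)]
      congr 1
      omega
    rw [hV, hsplit,
      show ((patt a₁ b i ++ (a₁ :: b :: patt a₁ b (j-i-1))) ++ [a₂, b]) ++ wy
        = (patt a₁ b i ++ [a₁]) ++ ((b :: patt a₁ b (j-i-1) ++ [a₂, b]) ++ wy) by simp]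
    exact List.take_left' (by simp [patt_length])
  rw [htW, htV] at hco
  have : a₂⁻¹ * a₁ ∈ H := by
    have heq : (patt a₁ b i ++ [a₂]).prod⁻¹ * (patt a₁ b i ++ [a₁]).prod = a₂⁻¹ * a₁ := by
      simp [List.prod_append, patt_prod, mul_assoc]
    rwa [heq] at hco
  exact h12 (by simpa using inv_mem this)

end Markers

section Assembly

variable (ha : IsAmalgam G₀ G₁ H)
variable {a₁ a₂ b : G}

include ha in
lemma powers
    (hc : ∀ F : Finset G, (1 : G) ∉ F →
      ∃ g : G, ((fun x => g * x * g⁻¹) '' (F : Set G)) ∩ (H : Set G) = ∅)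
    (h1 : a₁ ∈ G₀) (h1' : a₁ ∉ H) (h2 : a₂ ∈ G₀) (h2' : a₂ ∉ H)
    (h12 : a₁⁻¹ * a₂ ∉ H) (hbG : b ∈ G₁) (hb' : b ∉ H) : IsPowersGroup G := by
  intro F hF k _hk
  obtain ⟨s, hs⟩ := unif ha hc h1 h1' h2 h2' h12 hbG hb' F hF
  refine ⟨{x | s*x ∈ H ∨ Rep G₀ G₁ H 1 (s*x)}, {x | Rep G₀ G₁ H 0 (s*x)},
    fun i => s⁻¹ * ((a₁*b)^i * (a₂*b)) * s, ?_, ?_, ?_, ?_⟩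
  · ext x
    simp only [Set.mem_union, Set.mem_setOf_eq, Set.mem_univ, iff_true]
    rcases tot ha (s*x) with h | h | h
    · exact Or.inl (Or.inl h)
    · exact Or.inr h
    · exact Or.inl (Or.inr h)
  · ext x
    simp only [Set.mem_inter_iff, Set.mem_setOf_eq, Set.mem_empty_iff_false, iff_false]
    rintro ⟨hD, hE⟩
    rcases hD with h | h
    · exact rep_notH ha hE h
    · exact rep_disjoint ha hE h
  · intro f hf
    ext x
    simp only [Set.mem_inter_iff, Set.mem_image, Set.mem_setOf_eq,
      Set.mem_empty_iff_false, iff_false]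
    rintro ⟨⟨x₀, hx₀D, rfl⟩, hxD⟩
    have h0 : Rep G₀ G₁ H 0 (s * (f * x₀)) := by
      have heq : s * (f * x₀) = (s * f * s⁻¹) * (s * x₀) := by group
      rw [heq]
      exact t00_mul ha (hs f hf) hx₀D
    rcases hxD with h | h
    · exact rep_notH ha h0 h
    · exact rep_disjoint ha h0 h
  · intro i j _ _ _ _ hij
    ext x
    simp only [Set.mem_inter_iff, Set.mem_image, Set.mem_setOf_eq,
      Set.mem_empty_iff_false, iff_false]
    rintro ⟨⟨x₁, hx₁, hxeq1⟩, ⟨x₂, hx₂, hxeq2⟩⟩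
    have h5 : (s⁻¹ * ((a₁*b)^i * (a₂*b)) * s) * x₁
        = (s⁻¹ * ((a₁*b)^j * (a₂*b)) * s) * x₂ := hxeq1.trans hxeq2.symm
    have heq : ((a₁*b)^i * (a₂*b)) * (s * x₁) = ((a₁*b)^j * (a₂*b)) * (s * x₂) := by
      calc ((a₁*b)^i * (a₂*b)) * (s * x₁)
          = s * ((s⁻¹ * ((a₁*b)^i * (a₂*b)) * s) * x₁) := by group
        _ = s * ((s⁻¹ * ((a₁*b)^j * (a₂*b)) * s) * x₂) := by rw [h5]
        _ = ((a₁*b)^j * (a₂*b)) * (s * x₂) := by group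
    rcases Nat.lt_or_ge i j with hlt | hge
    · exact marker ha h1 h1' h2 h2' h12 hbG hb' hlt hx₁ hx₂ heq
    · have hlt : j < i := by omega
      exact marker ha h1 h1' h2 h2' h12 hbG hb' hlt hx₂ hx₁ heq.symm

end Assembly

/-- odd reduced words starting and ending in `G₁ \ H` -/
def T11 (G₀ G₁ H : Subgroup G) (x : G) : Prop :=
  ∃ w, Alt G₀ G₁ H 1 w ∧ w ≠ [] ∧ w.prod = x ∧ w.length % 2 = 1

/-- the `Ω`-part outside `H` : reduced words of type 0 with first letter in `u·H` -/
def OmP (G₀ G₁ H : Subgroup G) (u : G) (x : G) : Prop :=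
  ∃ (h : G) (w : List G), h ∈ H ∧ Alt G₀ G₁ H 0 ((u*h) :: w) ∧ ((u*h) :: w).prod = x

section FS

variable (ha : IsAmalgam G₀ G₁ H)
variable {a₁ a₂ b u v : G}
include ha

lemma t00_to_t11 (hbG : b ∈ G₁) (hb' : b ∉ H) {y : G} (hy : T00 G₀ G₁ H y) :
    T11 G₀ G₁ H (b * y * b⁻¹) := by
  obtain ⟨w, hw, hwne, hwp, hwodd⟩ := hy
  refine ⟨[b] ++ w ++ [b⁻¹], ?_, by simp, ?_, by simp; omega⟩
  · refine alt_append (alt_append ?_ (alt_parity (by simp) hw)) ?_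
    · rw [alt_singleton, SS_eq1 (by simp)]; exact ⟨hbG, hb'⟩
    · rw [alt_singleton, SS_eq1 (by simp; omega)]
      exact ⟨inv_mem hbG, fun hh => hb' (by simpa using inv_mem hh)⟩
  · rw [← hwp]; simp [List.prod_append, mul_assoc]

lemma t11_mul {x y : G} (hx : T11 G₀ G₁ H x) (hy : y ∈ H ∨ Rep G₀ G₁ H 0 y) :
    Rep G₀ G₁ H 1 (x * y) := by
  obtain ⟨w, hw, hwne, hwp, hwodd⟩ := hx
  rcases hy with hyH | ⟨wy, hwy, hwyne, hwyp⟩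
  · rcases List.eq_nil_or_concat w with rfl | ⟨w', c, hconc⟩
    · exact absurd rfl hwne
    rw [List.concat_eq_append] at hconc; subst hconc
    refine ⟨w' ++ [c * y], ?_, by simp, ?_⟩
    · rw [alt_snoc] at hw ⊢
      refine ⟨hw.1, mul_mem hw.2.1 (H_le_SS ha _ hyH), fun hmem => hw.2.2 ?_⟩
      have : c * y * y⁻¹ ∈ H := mul_mem hmem (inv_mem hyH)
      simpa using this
    · rw [← hwp]; simp [List.prod_append, mul_assoc]
  · refine ⟨w ++ wy, ?_, by simp [hwne], ?_⟩
    · exact alt_append hw (alt_parity (by omega) hwy)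
    · rw [List.prod_append, hwp, hwyp]

omit ha in
lemma omp_head (hu : u ∈ G₀) (hu' : u ∉ H) {x : G} (hx : OmP G₀ G₁ H u x) :
    Rep G₀ G₁ H 0 x := by
  obtain ⟨h, w, _, h2, h3⟩ := hx
  exact ⟨(u*h) :: w, h2, by simp, h3⟩

/-- `γ = u·b·v` maps `Rep 1` into the good part of `Ω` -/
lemma gam_rep1 (hu : u ∈ G₀) (hu' : u ∉ H) (hv : v ∈ G₀) (hv' : v ∉ H)
    (hbG : b ∈ G₁) (hb' : b ∉ H) {x : G} (hx : Rep G₀ G₁ H 1 x) :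
    OmP G₀ G₁ H u ((u * (b * v)) * x) := by
  obtain ⟨w, hw, hwne, hwp⟩ := hx
  refine ⟨1, [b, v] ++ w, one_mem H, ?_, ?_⟩
  · rw [show ((u*1) :: ([b, v] ++ w)) = ([u*1] ++ [b] ++ [v]) ++ w by simp]
    refine alt_append ?_ (alt_parity (by simp) hw)
    refine alt_append (alt_append ?_ ?_) ?_
    · rw [alt_singleton, SS_eq0 (by simp)]; simpa using ⟨hu, hu'⟩
    · rw [alt_singleton, SS_eq1 (by simp)]; exact ⟨hbG, hb'⟩
    · rw [alt_singleton, SS_eq0 (by simp)]; exact ⟨hv, hv'⟩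
  · rw [← hwp]; simp [List.prod_append, mul_assoc]

/-- `γ` maps `Ω = H ∪ OmP` into the good part -/
lemma gam_omega (hu : u ∈ G₀) (hu' : u ∉ H) (hv : v ∈ G₀) (hv' : v ∉ H)
    (hvu : v * u ∉ H) (hbG : b ∈ G₁) (hb' : b ∉ H) {x : G}
    (hx : x ∈ H ∨ OmP G₀ G₁ H u x) :
    OmP G₀ G₁ H u ((u * (b * v)) * x) := by
  rcases hx with hxH | ⟨h, w, hh, hwalt, hwp⟩
  · refine ⟨1, [b, v * x], one_mem H, ?_, ?_⟩
    · rw [show ((u*1) :: [b, v*x]) = [u*1] ++ [b] ++ [v*x] by simp]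
      refine alt_append (alt_append ?_ ?_) ?_
      · rw [alt_singleton, SS_eq0 (by simp)]; simpa using ⟨hu, hu'⟩
      · rw [alt_singleton, SS_eq1 (by simp)]; exact ⟨hbG, hb'⟩
      · rw [alt_singleton, SS_eq0 (by simp)]
        refine ⟨mul_mem hv (ha.le_left hxH), fun hmem => hv' ?_⟩
        have := mul_mem hmem (inv_mem hxH); simpa using this
    · simp [mul_assoc]
  · -- x = (u*h) :: w form
    refine ⟨1, [b, v * (u * h)] ++ w, one_mem H, ?_, ?_⟩
    · rw [show ((u*1) :: ([b, v*(u*h)] ++ w)) = ([u*1] ++ [b] ++ [v*(u*h)]) ++ w by simp]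
      refine alt_append ?_ (alt_parity (by simp) (alt_cons.1 hwalt).2)
      refine alt_append (alt_append ?_ ?_) ?_
      · rw [alt_singleton, SS_eq0 (by simp)]; simpa using ⟨hu, hu'⟩
      · rw [alt_singleton, SS_eq1 (by simp)]; exact ⟨hbG, hb'⟩
      · rw [alt_singleton, SS_eq0 (by simp)]
        constructor
        · exact mul_mem hv (mul_mem hu (ha.le_left hh))
        · intro hmem
          apply hvu
          have : (v * (u * h)) * h⁻¹ ∈ H := mul_mem hmem (inv_mem hh)
          have heq : (v * (u * h)) * h⁻¹ = v * u := by group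
          rwa [heq] at this
    · rw [← hwp]; simp [List.prod_append, mul_assoc]

omit ha in
lemma uv_pair (h1 : a₁ ∈ G₀) (h1' : a₁ ∉ H) (h2 : a₂ ∈ G₀) (h2' : a₂ ∉ H)
    (h12 : a₁⁻¹ * a₂ ∉ H) :
    ∃ u v : G, u ∈ G₀ ∧ u ∉ H ∧ v ∈ G₀ ∧ v ∉ H ∧ v * u ∉ H := by
  by_cases hA : a₁ * a₁ ∈ H
  · by_cases hB : a₁ * a₂ ∈ H
    · exfalso
      apply h12
      have := mul_mem (inv_mem hA) hB
      have heq : (a₁ * a₁)⁻¹ * (a₁ * a₂) = a₁⁻¹ * a₂ := by group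
      rwa [heq] at this
    · exact ⟨a₂, a₁, h2, h2', h1, h1', hB⟩
  · exact ⟨a₁, a₁, h1, h1', h1, h1', hA⟩


include ha in
set_option maxHeartbeats 1000000 in
lemma freeSemigroup
    (hc : ∀ F : Finset G, (1 : G) ∉ F →
      ∃ g : G, ((fun x => g * x * g⁻¹) '' (F : Set G)) ∩ (H : Set G) = ∅)
    (h1 : a₁ ∈ G₀) (h1' : a₁ ∉ H) (h2 : a₂ ∈ G₀) (h2' : a₂ ∉ H)
    (h12 : a₁⁻¹ * a₂ ∉ H) (hbG : b ∈ G₁) (hb' : b ∉ H) :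
    HasFreeSemigroupProperty G := by
  classical
  intro F
  set N : Finset G := ((F ×ˢ F).filter (fun p => p.1 ≠ p.2)).image (fun p => p.1⁻¹ * p.2)
    with hN
  set Y : Finset G := N ∪ F.erase 1 with hY
  have h1Y : (1:G) ∉ Y := by
    rw [hY]
    intro hmem
    rcases Finset.mem_union.1 hmem with hmem | hmem
    · rw [hN] at hmem
      obtain ⟨⟨p1, p2⟩, hp, heq⟩ := Finset.mem_image.1 hmem
      exact (Finset.mem_filter.1 hp).2 (by rwa [inv_mul_eq_one] at heq)
    · exact (Finset.mem_erase.1 hmem).1 rfl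
  obtain ⟨s₀, hs₀⟩ := unif ha hc h1 h1' h2 h2' h12 hbG hb' Y h1Y
  obtain ⟨u, v, hu, hu', hv, hv', hvu⟩ := uv_pair (H := H) h1 h1' h2 h2' h12
  set s : G := b * s₀ with hsdef
  set γ : G := u * (b * v) with hγdef
  refine ⟨s⁻¹ * γ * s, ?_⟩
  have hT11 : ∀ y ∈ Y, T11 G₀ G₁ H (s * y * s⁻¹) := by
    intro y hy
    have h5 := t00_to_t11 ha hbG hb' (hs₀ y hy)
    have heq : b * (s₀ * y * s₀⁻¹) * b⁻¹ = s * y * s⁻¹ := by rw [hsdef]; group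
    rwa [heq] at h5
  have hblock : ∀ f ∈ F, ∀ x : G, (x ∈ H ∨ OmP G₀ G₁ H u x) →
      OmP G₀ G₁ H u ((γ * (s * f * s⁻¹)) * x) := by
    intro f hf x hx
    by_cases hf1 : f = 1
    · subst hf1
      have h5 := gam_omega ha hu hu' hv hv' hvu hbG hb' hx
      have heq : (u * (b * v)) * x = (γ * (s * 1 * s⁻¹)) * x := by rw [hγdef]; group
      rwa [heq] at h5
    · have hfY : f ∈ Y := by
        rw [hY]; exact Finset.mem_union_right _ (Finset.mem_erase.2 ⟨hf1, hf⟩)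
      have hrep1 : Rep G₀ G₁ H 1 ((s * f * s⁻¹) * x) := by
        refine t11_mul ha (hT11 f hfY) ?_
        rcases hx with h | h
        · exact Or.inl h
        · exact Or.inr (omp_head hu hu' h)
      have h5 := gam_rep1 ha hu hu' hv hv' hbG hb' hrep1
      have heq : (u * (b * v)) * ((s * f * s⁻¹) * x) = (γ * (s * f * s⁻¹)) * x := by
        rw [hγdef]; group
      rwa [heq] at h5
  have hdisj : ∀ f ∈ F, ∀ f' ∈ F, f ≠ f' → ∀ x x' : G,
      (x ∈ H ∨ OmP G₀ G₁ H u x) → (x' ∈ H ∨ OmP G₀ G₁ H u x') →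
      (γ * (s * f * s⁻¹)) * x ≠ (γ * (s * f' * s⁻¹)) * x' := by
    intro f hf f' hf' hne x x' hx hx' hcon
    have hδY : f⁻¹ * f' ∈ Y := by
      rw [hY]
      refine Finset.mem_union_left _ ?_
      rw [hN]
      exact Finset.mem_image.2 ⟨(f, f'),
        Finset.mem_filter.2 ⟨Finset.mem_product.2 ⟨hf, hf'⟩, hne⟩, rfl⟩
    have hrep1 : Rep G₀ G₁ H 1 ((s * (f⁻¹ * f') * s⁻¹) * x') := by
      refine t11_mul ha (hT11 _ hδY) ?_
      rcases hx' with h | h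
      · exact Or.inl h
      · exact Or.inr (omp_head hu hu' h)
    have hxeq : x = (s * (f⁻¹ * f') * s⁻¹) * x' := by
      have h5 : (s * f * s⁻¹)⁻¹ * (γ⁻¹ * ((γ * (s * f * s⁻¹)) * x)) = x := by group
      rw [hcon] at h5
      rw [← h5]; group
    rw [← hxeq] at hrep1
    rcases hx with h | h
    · exact rep_notH ha hrep1 h
    · exact rep_disjoint ha (omp_head hu hu' h) hrep1
  have hein : ∀ (l : List G), (∀ e ∈ l, e ∈ (fun f => (s⁻¹ * γ * s) * f) '' (F : Set G)) →
      ∀ x : G, (x ∈ H ∨ OmP G₀ G₁ H u x) →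
      ((s * l.prod * s⁻¹) * x ∈ H ∨ OmP G₀ G₁ H u ((s * l.prod * s⁻¹) * x)) ∧
      (l ≠ [] → OmP G₀ G₁ H u ((s * l.prod * s⁻¹) * x)) := by
    intro l
    induction l with
    | nil =>
      intro _ x hx
      exact ⟨by simpa using hx, fun hcon => absurd rfl hcon⟩
    | cons e r ih =>
      intro hmem x hx
      obtain ⟨f, hfF, hfe⟩ := hmem e (by simp)
      have hr := ih (fun e' he' => hmem e' (by simp [he'])) x hx
      have heq : (s * (e :: r).prod * s⁻¹) * x
          = (γ * (s * f * s⁻¹)) * ((s * r.prod * s⁻¹) * x) := by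
        simp only [List.prod_cons, ← hfe]
        group
      have hres := hblock f hfF _ hr.1
      rw [heq]
      exact ⟨Or.inr hres, fun _ => hres⟩
  have main : ∀ (w₁ : List G), (∀ x ∈ w₁, x ∈ (fun f => (s⁻¹ * γ * s) * f) '' (F : Set G)) →
      ∀ (w₂ : List G), (∀ x ∈ w₂, x ∈ (fun f => (s⁻¹ * γ * s) * f) '' (F : Set G)) →
      w₁.prod = w₂.prod → w₁ = w₂ := by
    intro w₁
    induction w₁ with
    | nil =>
      intro _ w₂ hm₂ hp
      cases w₂ with
      | nil => rfl
      | cons e r =>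
        exfalso
        have h5 := (hein (e :: r) hm₂ 1 (Or.inl (one_mem H))).2 (by simp)
        rw [← hp] at h5
        simp only [List.prod_nil] at h5
        have h6 : OmP G₀ G₁ H u 1 := by simpa using h5
        exact rep_notH ha (omp_head hu hu' h6) (one_mem H)
    | cons e₁ r₁ ih =>
      intro hm₁ w₂ hm₂ hp
      cases w₂ with
      | nil =>
        exfalso
        have h5 := (hein (e₁ :: r₁) hm₁ 1 (Or.inl (one_mem H))).2 (by simp)
        rw [hp] at h5
        simp only [List.prod_nil] at h5
        have h6 : OmP G₀ G₁ H u 1 := by simpa using h5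
        exact rep_notH ha (omp_head hu hu' h6) (one_mem H)
      | cons e₂ r₂ =>
        obtain ⟨f₁, hf₁F, hfe₁⟩ := hm₁ e₁ (by simp)
        obtain ⟨f₂, hf₂F, hfe₂⟩ := hm₂ e₂ (by simp)
        have hr₁ := (hein r₁ (fun e' he' => hm₁ e' (by simp [he'])) 1 (Or.inl (one_mem H))).1
        have hr₂ := (hein r₂ (fun e' he' => hm₂ e' (by simp [he'])) 1 (Or.inl (one_mem H))).1
        have hf12 : f₁ = f₂ := by
          by_contra hne
          refine hdisj f₁ hf₁F f₂ hf₂F hne _ _ hr₁ hr₂ ?_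
          have heq₁ : (γ * (s * f₁ * s⁻¹)) * ((s * r₁.prod * s⁻¹) * 1)
              = (s * (e₁ :: r₁).prod * s⁻¹) * 1 := by
            simp only [List.prod_cons, ← hfe₁]
            group
          have heq₂ : (γ * (s * f₂ * s⁻¹)) * ((s * r₂.prod * s⁻¹) * 1)
              = (s * (e₂ :: r₂).prod * s⁻¹) * 1 := by
            simp only [List.prod_cons, ← hfe₂]
            group
          rw [heq₁, heq₂, hp]
        have he12 : e₁ = e₂ := by rw [← hfe₁, ← hfe₂, hf12]
        have hrp : r₁.prod = r₂.prod := by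
          have h5 : e₁ * r₁.prod = e₂ * r₂.prod := by
            simpa only [List.prod_cons] using hp
          rw [he12] at h5
          exact mul_left_cancel h5
        rw [he12, ih (fun e' he' => hm₁ e' (by simp [he'])) r₂
          (fun e' he' => hm₂ e' (by simp [he'])) hrp]
  intro w₁ w₂ _ _ hm₁ hm₂ hp
  exact main w₁ hm₁ w₂ hm₂ hp

end FS

section Final

variable {K : Subgroup G}

lemma exists_nonH (hne : H.relIndex K ≠ 1) : ∃ x, x ∈ K ∧ x ∉ H := by
  by_contra hcon
  push_neg at hcon
  exact hne (Subgroup.relIndex_eq_one.2 (fun x hx => hcon x hx))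

lemma exists_pair (hne1 : H.relIndex K ≠ 1) (hne2 : H.relIndex K ≠ 2) :
    ∃ a₁ a₂, a₁ ∈ K ∧ a₁ ∉ H ∧ a₂ ∈ K ∧ a₂ ∉ H ∧ a₁⁻¹ * a₂ ∉ H := by
  obtain ⟨a₁, ha₁, ha₁'⟩ := exists_nonH hne1
  by_contra hcon
  push_neg at hcon
  apply hne2
  have h2 : (H.subgroupOf K).index = 2 := by
    rw [Subgroup.index_eq_two_iff]
    refine ⟨⟨a₁, ha₁⟩, fun c => ?_⟩
    by_cases hcH : (c : G) ∈ H
    · refine Or.inr ⟨(Subgroup.mem_subgroupOf).2 hcH, fun hmem => ?_⟩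
      rw [Subgroup.mem_subgroupOf] at hmem
      apply ha₁'
      have h5 := mul_mem (inv_mem hcH) hmem
      simpa using h5
    · refine Or.inl ⟨?_, fun hmem => hcH ((Subgroup.mem_subgroupOf).1 hmem)⟩
      rw [Subgroup.mem_subgroupOf]
      have h5 := hcon (c : G)⁻¹ a₁ (inv_mem c.2)
        (fun hmem => hcH (by simpa using inv_mem hmem)) ha₁ ha₁'
      simpa using h5
  exact h2

lemma amalgam_swap (ha : IsAmalgam G₀ G₁ H) : IsAmalgam G₁ G₀ H where
  le_left := ha.le_right
  le_right := ha.le_left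
  inf_eq := by rw [inf_comm]; exact ha.inf_eq
  closure_eq_top := by rw [Set.union_comm]; exact ha.closure_eq_top
  reduced := by
    intro j w hne halt
    refine ha.reduced (j+1) w hne ?_
    intro i hi
    have h5 := halt i hi
    rcases Nat.mod_two_eq_zero_or_one (i+j) with h | h
    · rw [if_pos h] at h5
      rw [if_neg (by omega)]
      exact h5
    · rw [if_neg (by omega)] at h5
      rw [if_pos (by omega)]
      exact h5

end Final
end Work

/-- Let `G = G₀ *_H G₁` be a nondegenerate free product with amalgamation such that for
every finite subset `F ⊆ G \ {e}` there exists `g ∈ G` with `g F g⁻¹ ∩ H = ∅`. Then `G` is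
a Powers group and `G` has the free semigroup property. -/
theorem powers_and_freeSemigroup {G : Type*} [Group G] (G₀ G₁ H : Subgroup G)
    (ha : IsAmalgam G₀ G₁ H) (hnd : Nondegenerate G₀ G₁ H)
    (hconj : ∀ F : Finset G, (1 : G) ∉ F →
      ∃ g : G, ((fun x => g * x * g⁻¹) '' (F : Set G)) ∩ (H : Set G) = ∅) :
    IsPowersGroup G ∧ HasFreeSemigroupProperty G := by
  obtain ⟨hnd1, hnd2, hnd3⟩ := hnd
  by_cases hcase : H.relIndex G₀ = 2
  · -- G₁ is the big factor : swap
    have hne2 : H.relIndex G₁ ≠ 2 := fun hcon => hnd3 ⟨hcase, hcon⟩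
    obtain ⟨a₁, a₂, p1, p2, p3, p4, p5⟩ := Work.exists_pair hnd2 hne2
    obtain ⟨c, q1, q2⟩ := Work.exists_nonH hnd1
    have ha' := Work.amalgam_swap ha
    exact ⟨Work.powers ha' hconj p1 p2 p3 p4 p5 q1 q2,
      Work.freeSemigroup ha' hconj p1 p2 p3 p4 p5 q1 q2⟩
  · obtain ⟨a₁, a₂, p1, p2, p3, p4, p5⟩ := Work.exists_pair hnd1 hcase
    obtain ⟨c, q1, q2⟩ := Work.exists_nonH hnd2
    exact ⟨Work.powers ha hconj p1 p2 p3 p4 p5 q1 q2,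
      Work.freeSemigroup ha hconj p1 p2 p3 p4 p5 q1 q2⟩
end
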